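/- arXiv:1505.05785 — 7 statements merged into one kernel-verified Lean document; each statement's English description precedes it below -/
import Mathlib

section
/- Let a₀ < a₁ < ... < a_d be rational numbers and let p be a monic polynomial of degree d with rational coefficients having d real roots r₁ < r₂ < ... < r_d that interlace the a_i, meaning a_{i−1} < r_i < a_i for each i = 1, ..., d. Then there exist unique rational numbers e₀, e₁, ..., e_d such that Σ_{i=0}^{d} e_i · ∏_{j ≠ i} (X − a_j) = p(X) as polynomials, and moreover every e_i is positive (and Σ_{i=0}^{d} e_i = 1). -/
open Polynomial Finset

namespace Stmt10

variable {d : ℕ}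

lemma prod_erase_ne_zero (a : Fin (d+1) → ℚ) (ha : StrictMono a) (k : Fin (d+1)) :
    (∏ j ∈ Finset.univ.erase k, (a k - a j)) ≠ 0 := by
  refine Finset.prod_ne_zero_iff.2 fun j hj => sub_ne_zero.2 fun h => ?_
  exact (Finset.mem_erase.1 hj).1 (ha.injective h).symm

lemma coeff_unique (a : Fin (d+1) → ℚ) (ha : StrictMono a) (p : Polynomial ℚ)
    (e : Fin (d+1) → ℚ)
    (he : ∑ i, C (e i) * ∏ j ∈ Finset.univ.erase i, (X - C (a j)) = p) (k : Fin (d+1)) :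
    e k = p.eval (a k) / (∏ j ∈ Finset.univ.erase k, (a k - a j)) := by
  have h := congrArg (Polynomial.eval (a k)) he
  simp only [eval_finset_sum, eval_mul, eval_C] at h
  rw [Finset.sum_eq_single k] at h
  · rw [eval_prod] at h
    have hc : ∀ j ∈ Finset.univ.erase k, ((X:Polynomial ℚ) - C (a j)).eval (a k) = a k - a j :=
      fun j _ => by simp
    rw [Finset.prod_congr rfl hc] at h
    rw [eq_div_iff (prod_erase_ne_zero a ha k), h]
  · intro i _ hik
    rw [eval_prod]
    exact mul_eq_zero_of_right _ (Finset.prod_eq_zero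
      (Finset.mem_erase.2 ⟨Ne.symm hik, Finset.mem_univ _⟩) (by simp))
  · exact fun h => absurd (Finset.mem_univ k) h

noncomputable def E (a : Fin (d+1) → ℚ) (p : Polynomial ℚ) (k : Fin (d+1)) : ℚ :=
  p.eval (a k) / (∏ j ∈ Finset.univ.erase k, (a k - a j))

lemma Q_natDegree (a : Fin (d+1) → ℚ) (i : Fin (d+1)) :
    (∏ j ∈ Finset.univ.erase i, ((X:Polynomial ℚ) - C (a j))).natDegree = d := by
  rw [natDegree_prod _ _ (fun j _ => X_sub_C_ne_zero _)]
  simp [Finset.card_erase_of_mem]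

lemma exists_rep (a : Fin (d+1) → ℚ) (ha : StrictMono a) (p : Polynomial ℚ)
    (hdeg : p.natDegree = d) :
    ∑ i, C (E a p i) * ∏ j ∈ Finset.univ.erase i, (X - C (a j)) = p := by
  set S := ∑ i, C (E a p i) * ∏ j ∈ Finset.univ.erase i, ((X:Polynomial ℚ) - C (a j)) with hSdef
  have hS : S.natDegree ≤ d := by
    refine natDegree_sum_le_of_forall_le _ _ fun i _ => ?_
    refine (natDegree_mul_le).trans ?_
    simp [Q_natDegree a i]
  have hg : S - p = 0 := by
    refine eq_zero_of_natDegree_lt_card_of_eval_eq_zero _ ha.injective (fun k => ?_) ?_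
    · have hev : S.eval (a k) = p.eval (a k) := by
        rw [hSdef]
        simp only [eval_finset_sum, eval_mul, eval_C]
        rw [Finset.sum_eq_single k]
        · rw [eval_prod]
          have hc : ∀ j ∈ Finset.univ.erase k, ((X:Polynomial ℚ) - C (a j)).eval (a k) = a k - a j :=
            fun j _ => by simp
          rw [Finset.prod_congr rfl hc, E, div_mul_cancel₀ _ (prod_erase_ne_zero a ha k)]
        · intro i _ hik
          rw [eval_prod]
          exact mul_eq_zero_of_right _ (Finset.prod_eq_zero
            (Finset.mem_erase.2 ⟨Ne.symm hik, Finset.mem_univ _⟩) (by simp))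
        · exact fun h => absurd (Finset.mem_univ k) h
      simp [hev]
    · calc (S - p).natDegree ≤ max S.natDegree p.natDegree := natDegree_sub_le _ _
        _ ≤ d := max_le hS hdeg.le
        _ < Fintype.card (Fin (d+1)) := by simp
  exact sub_eq_zero.1 hg

lemma sum_eq_one (a : Fin (d+1) → ℚ) (p : Polynomial ℚ) (hmonic : p.Monic)
    (hdeg : p.natDegree = d) (e : Fin (d+1) → ℚ)
    (he : ∑ i, C (e i) * ∏ j ∈ Finset.univ.erase i, (X - C (a j)) = p) :
    ∑ i, e i = 1 := by
  have h := congrArg (fun q : Polynomial ℚ => q.coeff d) he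
  simp only [finset_sum_coeff, coeff_C_mul] at h
  have hQ : ∀ i : Fin (d+1),
      (∏ j ∈ Finset.univ.erase i, ((X:Polynomial ℚ) - C (a j))).coeff d = 1 := by
    intro i
    have hm : (∏ j ∈ Finset.univ.erase i, ((X:Polynomial ℚ) - C (a j))).Monic :=
      monic_prod_of_monic _ _ fun j _ => monic_X_sub_C _
    have := hm.coeff_natDegree
    rwa [Q_natDegree a i] at this
  have hp : p.coeff d = 1 := by
    have := hmonic.coeff_natDegree
    rwa [hdeg] at this
  calc ∑ i, e i = ∑ i, e i * (∏ j ∈ Finset.univ.erase i, ((X:Polynomial ℚ) - C (a j))).coeff d := by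
        refine Finset.sum_congr rfl fun i _ => ?_
        rw [hQ i, mul_one]
    _ = p.coeff d := h
    _ = 1 := hp

lemma factor_real (p : Polynomial ℚ) (hmonic : p.Monic) (hdeg : p.natDegree = d)
    (r : Fin d → ℝ) (hr : StrictMono r) (hroot : ∀ i, Polynomial.aeval (r i) p = 0) :
    p.map (algebraMap ℚ ℝ) = ∏ j : Fin d, (X - C (r j)) := by
  set P := p.map (algebraMap ℚ ℝ) with hPdef
  set R := ∏ j : Fin d, ((X:Polynomial ℝ) - C (r j)) with hRdef
  have hP : P.Monic := hmonic.map _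
  have hPdeg : P.natDegree = d := by rw [hPdef, natDegree_map]; exact hdeg
  have hR : R.Monic := monic_prod_of_monic _ _ fun j _ => monic_X_sub_C _
  have hRdeg : R.natDegree = d := by
    rw [hRdef, natDegree_prod _ _ fun j _ => X_sub_C_ne_zero _]; simp
  by_contra hne
  have hsub : P - R ≠ 0 := sub_ne_zero.2 hne
  have hdlt : (P - R).degree < (d : ℕ) := by
    have := Polynomial.degree_sub_lt (p := P) (q := R) ?_ hP.ne_zero ?_
    · rwa [degree_eq_natDegree hP.ne_zero, hPdeg] at this
    · rw [degree_eq_natDegree hP.ne_zero, degree_eq_natDegree hR.ne_zero, hPdeg, hRdeg]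
    · rw [hP.leadingCoeff, hR.leadingCoeff]
  have hndlt : (P - R).natDegree < d := (Polynomial.natDegree_lt_iff_degree_lt hsub).2 hdlt
  have : P - R = 0 := by
    refine eq_zero_of_natDegree_lt_card_of_eval_eq_zero _ hr.injective (fun i => ?_) ?_
    · have hPe : P.eval (r i) = 0 := by
        rw [hPdef, eval_map, ← aeval_def]; exact hroot i
      have hRe : R.eval (r i) = 0 := by
        rw [hRdef, eval_prod]
        exact Finset.prod_eq_zero (Finset.mem_univ i) (by simp)
      simp [hPe, hRe]
    · simpa using hndlt
  exact hsub this

lemma erase_prod_cast (a : Fin (d+1) → ℚ) (k : Fin (d+1)) :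
    ((∏ j ∈ Finset.univ.erase k, (a k - a j) : ℚ) : ℝ)
      = ∏ j : Fin d, (((a k : ℚ):ℝ) - ((a (k.succAbove j) : ℚ):ℝ)) := by
  push_cast
  have h : Finset.univ.erase k = Finset.univ.image k.succAbove := by
    rw [Fin.image_succAbove_univ, Finset.compl_eq_univ_sdiff, ← Finset.erase_eq]
  rw [h, Finset.prod_image (fun x _ y _ h => k.succAbove_right_injective h)]

lemma pos_aux (a : Fin (d+1) → ℚ) (ha : StrictMono a) (r : Fin d → ℝ)
    (hinter : ∀ i : Fin d, ((a i.castSucc : ℚ) : ℝ) < r i ∧ r i < ((a i.succ : ℚ) : ℝ))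
    (k : Fin (d+1)) (j : Fin d) :
    0 < (((a k:ℚ):ℝ) - r j) / (((a k:ℚ):ℝ) - ((a (k.succAbove j):ℚ):ℝ)) := by
  rcases lt_or_ge j.castSucc k with h | h
  · rw [Fin.succAbove_of_castSucc_lt _ _ h]
    refine div_pos (sub_pos.2 ?_) (sub_pos.2 (by exact_mod_cast ha h))
    calc r j < ((a j.succ:ℚ):ℝ) := (hinter j).2
      _ ≤ ((a k:ℚ):ℝ) := by
        exact_mod_cast ha.monotone (Fin.castSucc_lt_iff_succ_le.1 h)
  · rw [Fin.succAbove_of_le_castSucc _ _ h]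
    refine div_pos_of_neg_of_neg (sub_neg.2 ?_) (sub_neg.2 ?_)
    · calc ((a k:ℚ):ℝ) ≤ ((a j.castSucc:ℚ):ℝ) := by exact_mod_cast ha.monotone h
        _ < r j := (hinter j).1
    · exact_mod_cast ha (lt_of_le_of_lt h (Fin.castSucc_lt_succ (i := j)))

lemma pos_coeff (a : Fin (d+1) → ℚ) (ha : StrictMono a) (p : Polynomial ℚ)
    (hmonic : p.Monic) (hdeg : p.natDegree = d)
    (r : Fin d → ℝ) (hr : StrictMono r) (hroot : ∀ i, Polynomial.aeval (r i) p = 0)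
    (hinter : ∀ i : Fin d, ((a i.castSucc : ℚ) : ℝ) < r i ∧ r i < ((a i.succ : ℚ) : ℝ))
    (e : Fin (d+1) → ℚ)
    (he : ∑ i, C (e i) * ∏ j ∈ Finset.univ.erase i, (X - C (a j)) = p) (k : Fin (d+1)) :
    0 < e k := by
  rw [coeff_unique a ha p e he k]
  have key : (((p.eval (a k) / (∏ j ∈ Finset.univ.erase k, (a k - a j)) : ℚ)) : ℝ)
      = ∏ j : Fin d, ((((a k:ℚ):ℝ) - r j) / (((a k:ℚ):ℝ) - ((a (k.succAbove j):ℚ):ℝ))) := by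
    rw [Rat.cast_div, erase_prod_cast a k, Finset.prod_div_distrib]
    congr 1
    have h1 : ((p.eval (a k) : ℚ) : ℝ) = (p.map (algebraMap ℚ ℝ)).eval ((a k : ℚ) : ℝ) := by
      rw [eval_map]
      exact (Polynomial.eval₂_at_apply (algebraMap ℚ ℝ) (a k)).symm
    rw [h1, factor_real p hmonic hdeg r hr hroot, eval_prod]
    exact Finset.prod_congr rfl fun j _ => by simp
  have : (0:ℝ) < ((p.eval (a k) / (∏ j ∈ Finset.univ.erase k, (a k - a j)) : ℚ) : ℝ) := by
    rw [key]
    exact Finset.prod_pos fun j _ => pos_aux a ha r hinter k j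
  exact_mod_cast this

end Stmt10

/-- if p is a monic rational polynomial of degree d whose d real roots
interlace the rationals a₀ < ⋯ < a_d, then p is uniquely a rational combination
Σᵢ eᵢ ∏_{j≠i}(X − aⱼ), and the coefficients eᵢ are positive and sum to 1. -/
theorem stmt_10 (d : ℕ) (a : Fin (d + 1) → ℚ) (ha : StrictMono a)
    (p : Polynomial ℚ) (hmonic : p.Monic) (hdeg : p.natDegree = d)
    (r : Fin d → ℝ) (hr : StrictMono r)
    (hroot : ∀ i, Polynomial.aeval (r i) p = 0)
    (hinter : ∀ i : Fin d, ((a i.castSucc : ℚ) : ℝ) < r i ∧ r i < ((a i.succ : ℚ) : ℝ)) :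
    (∃! e : Fin (d + 1) → ℚ,
      ∑ i, Polynomial.C (e i) *
        ∏ j ∈ Finset.univ.erase i, (Polynomial.X - Polynomial.C (a j)) = p) ∧
    ∀ e : Fin (d + 1) → ℚ,
      (∑ i, Polynomial.C (e i) *
        ∏ j ∈ Finset.univ.erase i, (Polynomial.X - Polynomial.C (a j)) = p) →
      (∀ i, 0 < e i) ∧ ∑ i, e i = 1 := by
  constructor
  · refine ⟨Stmt10.E a p, Stmt10.exists_rep a ha p hdeg, fun e he => ?_⟩
    funext k
    rw [Stmt10.coeff_unique a ha p e he k]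
    rfl
  · intro e he
    exact ⟨fun k => Stmt10.pos_coeff a ha p hmonic hdeg r hr hroot hinter e he k,
      Stmt10.sum_eq_one a p hmonic hdeg e he⟩
end

section
/- For every squarefree integer D ≥ 2 there exist positive rational numbers E_d and E_e and a positive rational number r such that 4·E_d² + 4·E_d·E_e + 4·E_e² + 12·E_d + 12·E_e + 9 = D·r². (In particular, one may choose a rational s with D·s² ∈ (1/3, 4/9) and take E_d = 1/(6·D·s² − 2) and E_e = (4 − 9·D·s²)/(6·D·s² − 2).) -/
/-- for every squarefree integer D ≥ 2 there are positive rationals E_d, E_e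
and a positive rational r with 4E_d² + 4E_dE_e + 4E_e² + 12E_d + 12E_e + 9 = D·r². -/
theorem stmt_11 (D : ℤ) (hD : 2 ≤ D) (hsf : Squarefree D) :
    ∃ Ed Ee r : ℚ, 0 < Ed ∧ 0 < Ee ∧ 0 < r ∧
      4 * Ed ^ 2 + 4 * Ed * Ee + 4 * Ee ^ 2 + 12 * Ed + 12 * Ee + 9 = (D : ℚ) * r ^ 2 := by
  have hD0 : (0:ℝ) < (D:ℝ) := by exact_mod_cast lt_of_lt_of_le (by norm_num) hD
  have hab : (1:ℝ)/(3*D) < 4/(9*D) := by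
    rw [div_lt_div_iff₀ (by positivity) (by positivity)]; nlinarith
  obtain ⟨q, hq1, hq2⟩ := exists_rat_btwn
    (Real.sqrt_lt_sqrt (by positivity) hab)
  have hs0 : (0:ℝ) < Real.sqrt (1/(3*D)) := Real.sqrt_pos.mpr (by positivity)
  have hq0 : (0:ℝ) < (q:ℝ) := lt_trans hs0 hq1
  have hq0' : (0:ℚ) < q := by exact_mod_cast hq0
  have h1 : (1:ℝ)/(3*D) < (q:ℝ)^2 := by
    calc (1:ℝ)/(3*D) = Real.sqrt (1/(3*D)) ^ 2 := (Real.sq_sqrt (by positivity)).symm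
    _ < (q:ℝ)^2 := by exact pow_lt_pow_left₀ hq1 (Real.sqrt_nonneg _) (by norm_num)
  have h2 : (q:ℝ)^2 < 4/(9*D) := by
    calc (q:ℝ)^2 < Real.sqrt (4/(9*D)) ^ 2 :=
      pow_lt_pow_left₀ hq2 hq0.le (by norm_num)
    _ = 4/(9*D) := Real.sq_sqrt (by positivity)
  -- translate to ℚ
  have h1' : (1:ℚ) < 3 * ((D:ℚ) * q^2) := by
    have : (1:ℝ) < 3 * ((D:ℝ) * (q:ℝ)^2) := by
      rw [div_lt_iff₀ (by positivity)] at h1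
      nlinarith
    exact_mod_cast this
  have h2' : 9 * ((D:ℚ) * q^2) < 4 := by
    have : 9 * ((D:ℝ) * (q:ℝ)^2) < 4 := by
      rw [lt_div_iff₀ (by positivity)] at h2
      nlinarith
    exact_mod_cast this
  set t : ℚ := (D:ℚ) * q^2 with ht
  have hu : (0:ℚ) < 6*t - 2 := by linarith
  have hnum : (0:ℚ) < 4 - 9*t := by linarith
  refine ⟨1/(6*t-2), (4-9*t)/(6*t-2), 6*q/(6*t-2), by positivity, by positivity, by positivity, ?_⟩
  have hune : (6*t - 2) ≠ 0 := ne_of_gt hu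
  field_simp
  ring_nf
  rw [ht]
end

section
/- Let G be a finite connected simple graph with boundary B and injective boundary values u : B → ℝ as in the context, and let σ be an orientation of G compatible with u. Then there exists a function h : V → ℝ with h = u on B and h(x) > h(y) for every edge directed from x to y by σ; that is, the set F_u(σ) is nonempty. -/
attribute [local instance] Classical.propDecidable

structure GraphOrientation {V : Type*} (G : SimpleGraph V) where
  dir : V → V → Prop
  dir_adj : ∀ x y, dir x y → G.Adj x y
  dir_total : ∀ x y, G.Adj x y → (dir x y ↔ ¬ dir y x)

variable {V : Type*} [Fintype V] [DecidableEq V]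

/-- σ is compatible with boundary values u. -/
def Compatible (G : SimpleGraph V) (B : Set V) (u : V → ℝ) (σ : GraphOrientation G) : Prop :=
  (∀ x, ¬ Relation.TransGen σ.dir x x) ∧
  (∀ x, x ∉ B → (∃ y, σ.dir x y) ∧ (∃ y, σ.dir y x)) ∧
  (∀ a ∈ B, ∀ b ∈ B, Relation.TransGen σ.dir a b → u b < u a)

/-- B has ≥ 2 vertices and every edge lies on a simple path between distinct boundary vertices. -/
def BoundaryOK (G : SimpleGraph V) (B : Set V) : Prop :=
  2 ≤ B.ncard ∧ ∀ e ∈ G.edgeSet, ∃ a ∈ B, ∃ b ∈ B, a ≠ b ∧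
    ∃ p : G.Walk a b, p.IsPath ∧ e ∈ p.edges

/-- h is c-harmonic at each interior vertex. -/
def Harmonic (G : SimpleGraph V) (B : Set V) (c : Sym2 V → ℝ) (h : V → ℝ) : Prop :=
  ∀ x, x ∉ B → ∑ y ∈ G.neighborFinset x, c s(x, y) * (h x - h y) = 0

/-- the enharmonic (fixed-energy) equation at x. -/
def EnharmonicAt (G : SimpleGraph V) (𝓔 : Sym2 V → ℝ) (h : V → ℝ) (x : V) : Prop :=
  ∑ y ∈ G.neighborFinset x, 𝓔 s(x, y) / (h x - h y) = 0

/-- the polytope of functions extending u and strictly decreasing along σ. -/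
def FuSigma (G : SimpleGraph V) (B : Set V) (u : V → ℝ) (σ : GraphOrientation G) : Set (V → ℝ) :=
  {h | (∀ b ∈ B, h b = u b) ∧ ∀ x y, σ.dir x y → h y < h x}

noncomputable def LogM (G : SimpleGraph V) (σ : GraphOrientation G) (𝓔 : Sym2 V → ℝ)
    (h : V → ℝ) : ℝ :=
  ∑ p ∈ Finset.univ.filter (fun p : V × V => σ.dir p.1 p.2),
    𝓔 s(p.1, p.2) * Real.log (h p.1 - h p.2)

noncomputable def Mfun (G : SimpleGraph V) (𝓔 : Sym2 V → ℝ) (h : V → ℝ) : ℝ :=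
  ∏ e ∈ G.edgeFinset,
    Sym2.lift ⟨fun x y => |h x - h y| ^ 𝓔 s(x, y),
      by intro x y; simp only []; rw [abs_sub_comm, Sym2.eq_swap]⟩ e

/-- for every orientation σ compatible with u the polytope F_u(σ) is nonempty. -/
theorem stmt_12 (G : SimpleGraph V) (hconn : G.Connected)
    (B : Set V) (hB : BoundaryOK G B) (u : V → ℝ) (hu : Set.InjOn u B)
    (σ : GraphOrientation G) (hσ : Compatible G B u σ) :
    ∃ h : V → ℝ, h ∈ FuSigma G B u σ := by

  classical
  obtain ⟨hacyc, hint, hbdry⟩ := hσ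
  have hirr : IsIrrefl V (Relation.TransGen σ.dir) := ⟨hacyc⟩
  have hwf : WellFounded (Relation.TransGen σ.dir) :=
    Finite.wellFounded_of_trans_of_irrefl _
  set A : V → Finset V :=
    fun x => Finset.univ.filter (fun a => a ∈ B ∧ Relation.ReflTransGen σ.dir a x) with hAdef
  have hmemA : ∀ a x, a ∈ A x ↔ a ∈ B ∧ Relation.ReflTransGen σ.dir a x := by
    intro a x; simp [hAdef]
  have hAne : ∀ x, (A x).Nonempty := by
    intro x
    induction x using hwf.induction with
    | _ x ih =>
      by_cases hx : x ∈ B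
      · exact ⟨x, (hmemA x x).mpr ⟨hx, Relation.ReflTransGen.refl⟩⟩
      · obtain ⟨_, y, hyx⟩ := hint x hx
        obtain ⟨a, ha⟩ := ih y (Relation.TransGen.single hyx)
        rw [hmemA] at ha
        exact ⟨a, (hmemA a x).mpr ⟨ha.1, ha.2.tail hyx⟩⟩
  set W : V → ℝ := fun x => (A x).inf' (hAne x) u with hWdef
  have hWB : ∀ x ∈ B, W x = u x := by
    intro x hx
    refine le_antisymm (Finset.inf'_le u ((hmemA x x).mpr ⟨hx, .refl⟩)) ?_
    refine Finset.le_inf' _ u fun a ha => ?_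
    obtain ⟨haB, hax⟩ := (hmemA a x).mp ha
    rcases (Relation.reflTransGen_iff_eq_or_transGen.mp hax) with h | h
    · subst h; exact le_rfl
    · exact (hbdry a haB x hx h).le
  have hmono : ∀ x y, σ.dir x y → W y ≤ W x := by
    intro x y hxy
    refine Finset.le_inf' _ u fun a ha => ?_
    obtain ⟨haB, hax⟩ := (hmemA a x).mp ha
    exact Finset.inf'_le u ((hmemA a y).mpr ⟨haB, hax.tail hxy⟩)
  have hupper : ∀ x y, x ∈ B → σ.dir x y → W y ≤ u x := by
    intro x y hx hxy
    exact Finset.inf'_le u ((hmemA x y).mpr ⟨hx, Relation.ReflTransGen.single hxy⟩)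
  have hstrict : ∀ x y, y ∈ B → σ.dir x y → u y < W x := by
    intro x y hy hxy
    rw [hWdef, Finset.lt_inf'_iff]
    intro a ha
    obtain ⟨haB, hax⟩ := (hmemA a x).mp ha
    exact hbdry a haB y hy (Relation.TransGen.tail' hax hxy)
  set ρ : V → ℕ :=
    fun x => (Finset.univ.filter (fun z => Relation.TransGen σ.dir x z)).card with hρdef
  have hρlt : ∀ x y, σ.dir x y → ρ y < ρ x := by
    intro x y hxy
    have hy : y ∉ Finset.univ.filter (fun z => Relation.TransGen σ.dir y z) := by
      simp [hacyc y]
    have hsub : insert y (Finset.univ.filter (fun z => Relation.TransGen σ.dir y z)) ⊆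
        Finset.univ.filter (fun z => Relation.TransGen σ.dir x z) := by
      intro z hz
      rcases Finset.mem_insert.mp hz with h | h
      · subst h; simp [Relation.TransGen.single hxy]
      · simp only [Finset.mem_filter, Finset.mem_univ, true_and] at h ⊢
        exact Relation.TransGen.head hxy h
    calc ρ y < ρ y + 1 := Nat.lt_succ_self _
      _ = (insert y (Finset.univ.filter (fun z => Relation.TransGen σ.dir y z))).card := by
          rw [Finset.card_insert_of_notMem hy]
      _ ≤ ρ x := Finset.card_le_card hsub
  set N : ℕ := Fintype.card V with hNdef
  have hρN : ∀ x, ρ x < N := by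
    intro x
    have hx : x ∉ Finset.univ.filter (fun z => Relation.TransGen σ.dir x z) := by
      simp [hacyc x]
    calc ρ x ≤ (Finset.univ.erase x).card := by
          refine Finset.card_le_card fun z hz => ?_
          simp only [Finset.mem_filter, Finset.mem_univ, true_and] at hz
          exact Finset.mem_erase.mpr ⟨fun h => hacyc x (h ▸ hz), Finset.mem_univ z⟩
      _ < N := Finset.card_erase_lt_of_mem (Finset.mem_univ x)
  set P : Finset (V × V) :=
    Finset.univ.filter (fun p : V × V => σ.dir p.1 p.2 ∧ p.1 ∉ B ∧ p.2 ∈ B) with hPdef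
  set Q : Finset ℝ := insert 1 (P.image fun p => W p.1 - u p.2) with hQdef
  have hQne : Q.Nonempty := ⟨1, Finset.mem_insert_self _ _⟩
  set m : ℝ := Q.min' hQne with hmdef
  have hm : 0 < m := by
    rw [hmdef, Finset.lt_min'_iff]
    intro b hb
    rw [hQdef] at hb
    rcases Finset.mem_insert.mp hb with h | h
    · subst h; norm_num
    · obtain ⟨p, hp, rfl⟩ := Finset.mem_image.mp h
      rw [hPdef] at hp
      simp only [Finset.mem_filter, Finset.mem_univ, true_and] at hp
      exact sub_pos.mpr (hstrict p.1 p.2 hp.2.2 hp.1)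
  set ε : ℝ := m / (N + 1) with hεdef
  have hNpos : (0:ℝ) < (N:ℝ) + 1 := by positivity
  have hε : 0 < ε := div_pos hm hNpos
  have hεN : ε * N < m := by
    have h1 : ε * ((N:ℝ) + 1) = m := div_mul_cancel₀ m (ne_of_gt hNpos)
    nlinarith
  refine ⟨fun x => if x ∈ B then u x else W x - ε * ((N:ℝ) - ρ x),
    fun b hb => if_pos hb, ?_⟩
  intro x y hxy
  by_cases hx : x ∈ B <;> by_cases hy : y ∈ B <;>
    simp only [if_pos, if_neg, hx, hy, if_true, if_false]
  · exact hbdry x hx y hy (Relation.TransGen.single hxy)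
  · have h1 : W y ≤ u x := hupper x y hx hxy
    have h2 : (ρ y : ℝ) < N := by exact_mod_cast hρN y
    nlinarith
  · have h1 : u y < W x := hstrict x y hy hxy
    have hgap : m ≤ W x - u y := by
      refine Finset.min'_le _ _ ?_
      rw [hQdef]
      refine Finset.mem_insert_of_mem (Finset.mem_image.mpr ⟨(x, y), ?_, rfl⟩)
      rw [hPdef]
      simp only [Finset.mem_filter, Finset.mem_univ, true_and]
      exact ⟨hxy, hx, hy⟩
    have h2 : (0:ℝ) ≤ (ρ x : ℝ) := Nat.cast_nonneg _
    nlinarith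
  · have h1 : W y ≤ W x := hmono x y hxy
    have h2 : (ρ y : ℝ) + 1 ≤ ρ x := by exact_mod_cast hρlt x y hxy
    nlinarith
end

section
/- Let G be a finite connected simple graph with boundary B as in the context, and let σ be an acyclic orientation of G such that no interior vertex is a source or a sink of σ. Then there exists a function ω assigning a positive real number to each edge of G such that at every interior vertex x the flow is conserved: the sum of ω over the edges directed into x by σ equals the sum of ω over the edges directed out of x by σ. -/
attribute [local instance] Classical.propDecidable

variable {V : Type*} [Fintype V] [DecidableEq V]

section Aux13

set_option linter.unusedSectionVars false

lemma chain'_zip {r : V → V → Prop} :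
    ∀ {L : List V}, L.Chain' r → ∀ p ∈ L.zip L.tail, r p.1 p.2
  | [], _, p, hp => by simp at hp
  | [a], _, p, hp => by simp at hp
  | a :: b :: t, h, p, hp => by
    rw [List.Chain', List.isChain_cons_cons] at h
    simp only [List.tail_cons, List.zip_cons_cons, List.mem_cons] at hp
    rcases hp with rfl | hp
    · exact h.1
    · exact chain'_zip h.2 p hp

lemma mem_zip_tail_cons {x : V × V} {l : List V} (c : V)
    (h : x ∈ l.zip l.tail) : x ∈ (c :: l).zip l := by
  cases l with
  | nil => simp at h
  | cons a t => simpa [List.zip_cons_cons] using Or.inr h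

lemma pair_mem_zip (a b : V) : ∀ (l t : List V),
    (a, b) ∈ (l ++ a :: b :: t).zip (l ++ a :: b :: t).tail
  | [], t => by simp [List.zip_cons_cons]
  | c :: l, t => by
    have := mem_zip_tail_cons (x := (a, b)) c (pair_mem_zip a b l t)
    simpa using this

lemma sum_countP_snd (x : V) : ∀ (l : List (V × V)),
    ∑ y : V, l.countP (fun p => decide (p = (y, x))) = l.countP (fun p => decide (p.2 = x))
  | [] => by simp
  | a :: l => by
    simp only [List.countP_cons, Finset.sum_add_distrib, sum_countP_snd x l]
    congr 1
    by_cases h : a.2 = x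
    · rw [Finset.sum_eq_single a.1] <;> simp_all [Prod.ext_iff] <;> tauto
    · simp_all [Prod.ext_iff]

lemma sum_countP_fst (x : V) : ∀ (l : List (V × V)),
    ∑ y : V, l.countP (fun p => decide (p = (x, y))) = l.countP (fun p => decide (p.1 = x))
  | [] => by simp
  | a :: l => by
    simp only [List.countP_cons, Finset.sum_add_distrib, sum_countP_fst x l]
    congr 1
    by_cases h : a.1 = x
    · rw [Finset.sum_eq_single a.2] <;> simp_all [Prod.ext_iff] <;> tauto
    · simp_all [Prod.ext_iff]

lemma count_balance (x : V) : ∀ (L : List V),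
    (L.zip L.tail).countP (fun p => decide (p.1 = x)) +
      (if L.getLast? = some x then 1 else 0) =
    (L.zip L.tail).countP (fun p => decide (p.2 = x)) +
      (if L.head? = some x then 1 else 0)
  | [] => by simp
  | [a] => by simp
  | a :: b :: t => by
    have ih := count_balance x (b :: t)
    simp only [List.tail_cons, List.zip_cons_cons, List.countP_cons,
      List.getLast?_cons_cons, List.head?_cons] at *
    by_cases h1 : a = x <;> by_cases h2 : b = x <;> simp_all <;> omega

lemma head?_append_left : ∀ (l₁ l₂ : List V), l₁ ≠ [] → (l₁ ++ l₂).head? = l₁.head?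
  | [], _, h => absurd rfl h
  | a :: t, l₂, _ => rfl

variable {G : SimpleGraph V} (σ : GraphOrientation G) (B : Set V)

lemma wf_fwd (hacyc : ∀ x, ¬ Relation.TransGen σ.dir x x) :
    WellFounded (fun a b : V => σ.dir b a) := by
  haveI : IsTrans V (fun a b : V => Relation.TransGen σ.dir b a) :=
    ⟨fun a b c h1 h2 => h2.trans h1⟩
  haveI : IsIrrefl V (fun a b : V => Relation.TransGen σ.dir b a) := ⟨fun a h => hacyc a h⟩
  exact Subrelation.wf (fun h => Relation.TransGen.single h)
    (Finite.wellFounded_of_trans_of_irrefl _)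

lemma wf_bwd (hacyc : ∀ x, ¬ Relation.TransGen σ.dir x x) : WellFounded σ.dir := by
  haveI : IsTrans V (Relation.TransGen σ.dir) := ⟨fun a b c h1 h2 => h1.trans h2⟩
  haveI : IsIrrefl V (Relation.TransGen σ.dir) := ⟨fun a h => hacyc a h⟩
  exact Subrelation.wf (fun h => Relation.TransGen.single h)
    (Finite.wellFounded_of_trans_of_irrefl _)

lemma exists_fwd (hacyc : ∀ x, ¬ Relation.TransGen σ.dir x x)
    (hnss : ∀ x, x ∉ B → ∃ y, σ.dir x y) (v : V) :
    ∃ l : List V, (v :: l).Chain' σ.dir ∧ ∃ b ∈ B, (v :: l).getLast? = some b := by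
  induction v using (wf_fwd σ hacyc).induction with
  | _ v ih =>
    by_cases hv : v ∈ B
    · exact ⟨[], List.isChain_singleton _, v, hv, by simp⟩
    · obtain ⟨y, hy⟩ := hnss v hv
      obtain ⟨l, hc, b, hb, hlast⟩ := ih y hy
      exact ⟨y :: l, List.isChain_cons_cons.mpr ⟨hy, hc⟩, b, hb, by
        rw [List.getLast?_cons_cons]; exact hlast⟩

lemma exists_bwd (hacyc : ∀ x, ¬ Relation.TransGen σ.dir x x)
    (hnss : ∀ x, x ∉ B → ∃ y, σ.dir y x) (v : V) :
    ∃ l : List V, (l ++ [v]).Chain' σ.dir ∧ ∃ a ∈ B, (l ++ [v]).head? = some a := by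
  induction v using (wf_bwd σ hacyc).induction with
  | _ v ih =>
    by_cases hv : v ∈ B
    · exact ⟨[], List.isChain_singleton v, v, hv, by simp⟩
    · obtain ⟨y, hy⟩ := hnss v hv
      obtain ⟨l, hc, a, ha, hhead⟩ := ih y hy
      refine ⟨l ++ [y], ?_, a, ha, ?_⟩
      · rw [List.Chain', List.isChain_append]
        refine ⟨hc, by simp, ?_⟩
        intro p hp q hq
        simp only [List.head?_cons, Option.mem_def, Option.some_inj] at hq
        rw [List.getLast?_concat] at hp
        simp only [Option.mem_def, Option.some_inj] at hp
        subst hp; subst hq; exact hy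
      · rw [head?_append_left _ _ (by simp)]; exact hhead

lemma exists_path (hacyc : ∀ x, ¬ Relation.TransGen σ.dir x x)
    (hnss : ∀ x, x ∉ B → (∃ y, σ.dir x y) ∧ (∃ y, σ.dir y x)) (u v : V) (huv : σ.dir u v) :
    ∃ L : List V, L.Chain' σ.dir ∧ (∃ a ∈ B, L.head? = some a) ∧
      (∃ b ∈ B, L.getLast? = some b) ∧ (u, v) ∈ L.zip L.tail := by
  obtain ⟨lb, hcb, a, ha, hha⟩ := exists_bwd σ B hacyc (fun x hx => (hnss x hx).2) u
  obtain ⟨lf, hcf, b, hb, hlb⟩ := exists_fwd σ B hacyc (fun x hx => (hnss x hx).1) v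
  refine ⟨(lb ++ [u]) ++ (v :: lf), ?_, ⟨a, ha, ?_⟩, ⟨b, hb, ?_⟩, ?_⟩
  · rw [List.Chain', List.isChain_append]
    refine ⟨hcb, hcf, ?_⟩
    intro p hp q hq
    rw [List.getLast?_concat] at hp
    simp only [List.head?_cons, Option.mem_def, Option.some_inj] at hp hq
    subst hp; subst hq; exact huv
  · rw [head?_append_left _ _ (by simp)]; exact hha
  · rw [List.getLast?_append]; simp [hlb]
  · have h : (lb ++ [u]) ++ (v :: lf) = lb ++ u :: v :: lf := by simp
    rw [h]; exact pair_mem_zip u v lb lf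

end Aux13

/-- an acyclic orientation with no interior sources or sinks carries a strictly
positive flow conserved at every interior vertex. -/
theorem stmt_13 (G : SimpleGraph V) (hconn : G.Connected)
    (B : Set V) (hB : BoundaryOK G B)
    (σ : GraphOrientation G) (hacyc : ∀ x, ¬ Relation.TransGen σ.dir x x)
    (hnosinksource : ∀ x, x ∉ B → (∃ y, σ.dir x y) ∧ (∃ y, σ.dir y x)) :
    ∃ ω : Sym2 V → ℝ, (∀ e ∈ G.edgeSet, 0 < ω e) ∧
      ∀ x, x ∉ B →
        ∑ y ∈ (G.neighborFinset x).filter (fun y => σ.dir y x), ω s(x, y) =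
        ∑ y ∈ (G.neighborFinset x).filter (fun y => σ.dir x y), ω s(x, y) := by
  classical
  -- choose for each directed pair a boundary-to-boundary chain through it
  have hLex : ∀ p : V × V, ∃ L : List V, σ.dir p.1 p.2 →
      L.Chain' σ.dir ∧ (∃ a ∈ B, L.head? = some a) ∧
      (∃ b ∈ B, L.getLast? = some b) ∧ (p.1, p.2) ∈ L.zip L.tail := by
    intro p
    by_cases h : σ.dir p.1 p.2
    · obtain ⟨L, hL⟩ := exists_path σ B hacyc hnosinksource p.1 p.2 h
      exact ⟨L, fun _ => hL⟩
    · exact ⟨[], fun h' => absurd h' h⟩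
  choose Lf hLf using hLex
  set D : Finset (V × V) := Finset.univ.filter (fun p : V × V => σ.dir p.1 p.2) with hD
  set N : V → V → ℕ := fun a b =>
    ∑ p ∈ D, ((Lf p).zip (Lf p).tail).countP (fun q => decide (q = (a, b))) with hN
  -- key vanishing: N a b = 0 unless σ.dir a b
  have hNzero : ∀ a b : V, ¬ σ.dir a b → N a b = 0 := by
    intro a b hab
    rw [hN]
    refine Finset.sum_eq_zero fun p hp => ?_
    by_contra hne
    have hpos : 0 < ((Lf p).zip (Lf p).tail).countP (fun q => decide (q = (a, b))) :=
      Nat.pos_of_ne_zero hne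
    rw [List.countP_pos_iff] at hpos
    obtain ⟨q, hq, hqe⟩ := hpos
    have hq' : q = (a, b) := by simpa using hqe
    subst hq'
    have hdirp : σ.dir p.1 p.2 := (Finset.mem_filter.mp hp).2
    have hchain := (hLf p hdirp).1
    exact hab (chain'_zip hchain _ hq)
  -- the weight function
  set ω : Sym2 V → ℝ := Sym2.lift ⟨fun a b => ((N a b + N b a : ℕ) : ℝ), by
    intro a b; push_cast; ring⟩ with hω
  have hωab : ∀ a b : V, ω s(a, b) = ((N a b + N b a : ℕ) : ℝ) := by
    intro a b; rw [hω]; rfl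
  refine ⟨ω, ?_, ?_⟩
  · -- positivity
    intro e he
    induction e using Sym2.ind with
    | _ u v =>
      rw [SimpleGraph.mem_edgeSet] at he
      rw [hωab]
      have hpos : ∀ a b : V, σ.dir a b → 0 < N a b := by
        intro a b hab
        rw [hN]
        refine Finset.sum_pos' (fun p _ => Nat.zero_le _) ⟨(a, b), ?_, ?_⟩
        · exact Finset.mem_filter.mpr ⟨Finset.mem_univ _, hab⟩
        · rw [List.countP_pos_iff]
          exact ⟨(a, b), (hLf (a, b) hab).2.2.2, by simp⟩
      have : 0 < N u v + N v u := by
        by_cases h : σ.dir u v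
        · have := hpos u v h; omega
        · have h' : σ.dir v u := by
            have := σ.dir_total u v he
            tauto
          have := hpos v u h'; omega
      exact_mod_cast this
  · -- conservation
    intro x hx
    have key : ∀ p ∈ D,
        ((Lf p).zip (Lf p).tail).countP (fun q => decide (q.2 = x)) =
        ((Lf p).zip (Lf p).tail).countP (fun q => decide (q.1 = x)) := by
      intro p hp
      have hdirp : σ.dir p.1 p.2 := (Finset.mem_filter.mp hp).2
      obtain ⟨-, ⟨a, ha, hha⟩, ⟨b, hb, hlb⟩, -⟩ := hLf p hdirp
      have hbal := count_balance x (Lf p)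
      have h1 : (Lf p).getLast? ≠ some x := by
        rw [hlb]; intro h; exact hx (Option.some_inj.mp h ▸ hb)
      have h2 : (Lf p).head? ≠ some x := by
        rw [hha]; intro h; exact hx (Option.some_inj.mp h ▸ ha)
      simp only [if_neg h1, if_neg h2, add_zero] at hbal
      omega
    have hsubin : (G.neighborFinset x).filter (fun y => σ.dir y x) ⊆ Finset.univ :=
      Finset.subset_univ _
    have hsubout : (G.neighborFinset x).filter (fun y => σ.dir x y) ⊆ Finset.univ :=
      Finset.subset_univ _
    have hin : ∑ y ∈ (G.neighborFinset x).filter (fun y => σ.dir y x), N y x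
        = ∑ p ∈ D, ((Lf p).zip (Lf p).tail).countP (fun q => decide (q.2 = x)) := by
      rw [Finset.sum_subset hsubin (by
        intro y _ hy
        apply hNzero
        intro hd
        exact hy (Finset.mem_filter.mpr
          ⟨(SimpleGraph.mem_neighborFinset G x y).mpr (σ.dir_adj y x hd).symm, hd⟩))]
      simp only [hN]
      rw [Finset.sum_comm]
      exact Finset.sum_congr rfl fun p _ => sum_countP_snd x ((Lf p).zip (Lf p).tail)
    have hout : ∑ y ∈ (G.neighborFinset x).filter (fun y => σ.dir x y), N x y
        = ∑ p ∈ D, ((Lf p).zip (Lf p).tail).countP (fun q => decide (q.1 = x)) := by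
      rw [Finset.sum_subset hsubout (by
        intro y _ hy
        apply hNzero
        intro hd
        exact hy (Finset.mem_filter.mpr
          ⟨(SimpleGraph.mem_neighborFinset G x y).mpr (σ.dir_adj x y hd), hd⟩))]
      simp only [hN]
      rw [Finset.sum_comm]
      exact Finset.sum_congr rfl fun p _ => sum_countP_fst x ((Lf p).zip (Lf p).tail)
    have hL : ∑ y ∈ (G.neighborFinset x).filter (fun y => σ.dir y x), ω s(x, y)
        = ((∑ y ∈ (G.neighborFinset x).filter (fun y => σ.dir y x), N y x : ℕ) : ℝ) := by
      rw [Nat.cast_sum]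
      refine Finset.sum_congr rfl fun y hy => ?_
      obtain ⟨hmem, hdyx⟩ := Finset.mem_filter.mp hy
      have hadj : G.Adj x y := (SimpleGraph.mem_neighborFinset G x y).mp hmem
      have hnd : ¬ σ.dir x y := fun h => ((σ.dir_total x y hadj).mp h) hdyx
      rw [hωab, hNzero x y hnd]
      simp
    have hR : ∑ y ∈ (G.neighborFinset x).filter (fun y => σ.dir x y), ω s(x, y)
        = ((∑ y ∈ (G.neighborFinset x).filter (fun y => σ.dir x y), N x y : ℕ) : ℝ) := by
      rw [Nat.cast_sum]
      refine Finset.sum_congr rfl fun y hy => ?_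
      obtain ⟨hmem, hdxy⟩ := Finset.mem_filter.mp hy
      have hadj : G.Adj x y := (SimpleGraph.mem_neighborFinset G x y).mp hmem
      have hnd : ¬ σ.dir y x := (σ.dir_total x y hadj).mp hdxy
      rw [hωab, hNzero y x hnd]
      simp
    rw [hL, hR, hin, hout]
    exact_mod_cast Finset.sum_congr rfl key
end

section
/- Let G be a finite connected simple graph with boundary B and injective boundary values u : B → ℝ as in the context, let c : E → ℝ assign a positive real conductance to each edge, and let h : V → ℝ extend u and be c-harmonic at every interior vertex, with h(x) ≠ h(y) for every edge xy. Then the orientation of G directing each edge from its larger h-value to its smaller h-value is compatible with u: it is acyclic, no interior vertex is a source or sink, and there is no directed path from a boundary vertex a to a boundary vertex b with u(a) ≤ u(b). -/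
attribute [local instance] Classical.propDecidable

variable {V : Type*} [Fintype V] [DecidableEq V]

/-- the orientation induced by a harmonic function (larger value to smaller
value on each edge) is compatible with the boundary values. -/
theorem stmt_14 (G : SimpleGraph V) (hconn : G.Connected)
    (B : Set V) (hB : BoundaryOK G B) (u : V → ℝ) (hu : Set.InjOn u B)
    (c : Sym2 V → ℝ) (hc : ∀ e ∈ G.edgeSet, 0 < c e)
    (h : V → ℝ) (hbd : ∀ b ∈ B, h b = u b) (hharm : Harmonic G B c h)
    (hne : ∀ x y, G.Adj x y → h x ≠ h y) :
    ∃ σ : GraphOrientation G,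
      (∀ x y, σ.dir x y ↔ G.Adj x y ∧ h y < h x) ∧ Compatible G B u σ := by
  refine ⟨⟨fun x y => G.Adj x y ∧ h y < h x, fun x y hxy => hxy.1, ?_⟩, fun x y => Iff.rfl, ?_⟩
  · intro x y hadj
    constructor
    · rintro ⟨-, hlt⟩ ⟨-, hlt'⟩; exact lt_asymm hlt hlt'
    · intro hn
      refine ⟨hadj, ?_⟩
      rcases lt_or_gt_of_ne (hne x y hadj) with h1 | h1
      · exact absurd ⟨hadj.symm, h1⟩ hn
      · exact h1
  have key : ∀ a b : V, Relation.TransGen (fun x y => G.Adj x y ∧ h y < h x) a b → h b < h a := by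
    intro a b htg
    induction htg with
    | single hab => exact hab.2
    | tail _ hbc ih => exact lt_trans hbc.2 ih
  refine ⟨fun x hx => lt_irrefl _ (key x x hx), ?_, ?_⟩
  · intro x hxB
    have hnb : (G.neighborFinset x).Nonempty := by
      obtain ⟨a, b', ha, hb', hab⟩ := (Set.one_lt_ncard_iff (Set.toFinite B)).mp (by have := hB.1; omega : 1 < B.ncard)
      have : ∃ z : V, z ≠ x := by
        by_cases hax : a = x
        · exact ⟨b', by rintro rfl; exact hab hax⟩
        · exact ⟨a, hax⟩
      obtain ⟨z, hz⟩ := this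
      obtain ⟨p⟩ := hconn.preconnected x z
      cases p with
      | nil => exact absurd rfl hz.symm
      | cons hadj _ => exact ⟨_, (SimpleGraph.mem_neighborFinset ..).mpr hadj⟩
    have hsum := hharm x hxB
    constructor
    · by_contra hno
      push_neg at hno
      have : ∀ y ∈ G.neighborFinset x, c s(x, y) * (h x - h y) < 0 := by
        intro y hy
        rw [SimpleGraph.mem_neighborFinset] at hy
        have hxy : h x < h y := by
          rcases lt_or_gt_of_ne (hne x y hy) with h1 | h1
          · exact h1
          · exact absurd ⟨hy, h1⟩ (hno y)
        have hcpos := hc s(x, y) (by rwa [SimpleGraph.mem_edgeSet])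
        nlinarith
      exact absurd hsum (ne_of_lt (Finset.sum_neg this hnb))
    · by_contra hno
      push_neg at hno
      have : ∀ y ∈ G.neighborFinset x, 0 < c s(x, y) * (h x - h y) := by
        intro y hy
        rw [SimpleGraph.mem_neighborFinset] at hy
        have hxy : h y < h x := by
          rcases lt_or_gt_of_ne (hne x y hy) with h1 | h1
          · exact absurd ⟨hy.symm, h1⟩ (hno y)
          · exact h1
        have hcpos := hc s(x, y) (by rwa [SimpleGraph.mem_edgeSet])
        nlinarith
      exact absurd hsum (ne_of_gt (Finset.sum_pos this hnb))
  · intro a ha b hb htg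
    have := key a b htg
    rwa [hbd a ha, hbd b hb] at this
end

section
/- Let U ⊆ ℝ² be an open set, let f : U → ℝ be twice continuously differentiable with partial derivatives f_x and f_y nowhere zero on U, and let g : U → ℝ be differentiable with g_x = −1/f_y and g_y = 1/f_x at every point of U. Then: (i) f_x·g_y = 1 and f_y·g_x = −1 on U; (ii) f satisfies the enharmonic equation f_xx/f_x² + f_yy/f_y² = 0 at every point of U; and (iii) g is twice differentiable at every point of U and satisfies the enharmonic equation g_xx/g_x² + g_yy/g_y² = 0 at every point of U. -/
private lemma clm_ext2 (L M : ℝ × ℝ →L[ℝ] ℝ) (h1 : L (1, 0) = M (1, 0))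
    (h2 : L (0, 1) = M (0, 1)) : L = M := by
  apply ContinuousLinearMap.ext
  rintro ⟨x, y⟩
  have hv : ((x, y) : ℝ × ℝ) = x • ((1 : ℝ), (0 : ℝ)) + y • ((0 : ℝ), (1 : ℝ)) := by
    simp [Prod.ext_iff]
  rw [hv, map_add, map_add, map_smul, map_smul, map_smul, map_smul, h1, h2]

/-- if f is C² on an open set U ⊆ ℝ² with nonvanishing partials and g is
differentiable with g_x = −1/f_y and g_y = 1/f_x, then (i) the fixed-energy Cauchy–Riemann
equations f_x g_y = 1 and f_y g_x = −1 hold, (ii) f satisfies the enharmonic equation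
f_xx/f_x² + f_yy/f_y² = 0, and (iii) g is twice differentiable and also enharmonic. -/
theorem stmt_15 (U : Set (ℝ × ℝ)) (hU : IsOpen U) (f g : ℝ × ℝ → ℝ)
    (hf : ContDiffOn ℝ 2 f U)
    (hfx : ∀ p ∈ U, fderiv ℝ f p (1, 0) ≠ 0)
    (hfy : ∀ p ∈ U, fderiv ℝ f p (0, 1) ≠ 0)
    (hg : ∀ p ∈ U, DifferentiableAt ℝ g p)
    (hgx : ∀ p ∈ U, fderiv ℝ g p (1, 0) = -1 / fderiv ℝ f p (0, 1))
    (hgy : ∀ p ∈ U, fderiv ℝ g p (0, 1) = 1 / fderiv ℝ f p (1, 0)) :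
    (∀ p ∈ U, fderiv ℝ f p (1, 0) * fderiv ℝ g p (0, 1) = 1 ∧
      fderiv ℝ f p (0, 1) * fderiv ℝ g p (1, 0) = -1) ∧
    (∀ p ∈ U,
      fderiv ℝ (fun q => fderiv ℝ f q (1, 0)) p (1, 0) / (fderiv ℝ f p (1, 0)) ^ 2 +
      fderiv ℝ (fun q => fderiv ℝ f q (0, 1)) p (0, 1) / (fderiv ℝ f p (0, 1)) ^ 2 = 0) ∧
    (∀ p ∈ U,
      DifferentiableAt ℝ (fun q => fderiv ℝ g q (1, 0)) p ∧
      DifferentiableAt ℝ (fun q => fderiv ℝ g q (0, 1)) p ∧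
      fderiv ℝ (fun q => fderiv ℝ g q (1, 0)) p (1, 0) / (fderiv ℝ g p (1, 0)) ^ 2 +
      fderiv ℝ (fun q => fderiv ℝ g q (0, 1)) p (0, 1) / (fderiv ℝ g p (0, 1)) ^ 2 = 0) := by
  have main : ∀ p ∈ U,
      (fderiv ℝ f p (1, 0) * fderiv ℝ g p (0, 1) = 1 ∧
        fderiv ℝ f p (0, 1) * fderiv ℝ g p (1, 0) = -1) ∧
      (fderiv ℝ (fun q => fderiv ℝ f q (1, 0)) p (1, 0) / (fderiv ℝ f p (1, 0)) ^ 2 +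
        fderiv ℝ (fun q => fderiv ℝ f q (0, 1)) p (0, 1) / (fderiv ℝ f p (0, 1)) ^ 2 = 0) ∧
      (DifferentiableAt ℝ (fun q => fderiv ℝ g q (1, 0)) p ∧
        DifferentiableAt ℝ (fun q => fderiv ℝ g q (0, 1)) p ∧
        fderiv ℝ (fun q => fderiv ℝ g q (1, 0)) p (1, 0) / (fderiv ℝ g p (1, 0)) ^ 2 +
        fderiv ℝ (fun q => fderiv ℝ g q (0, 1)) p (0, 1) / (fderiv ℝ g p (0, 1)) ^ 2 = 0) := by
    intro p hp
    have hpU : U ∈ nhds p := hU.mem_nhds hp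
    set a := fderiv ℝ f p (1, 0) with ha_def
    set b := fderiv ℝ f p (0, 1) with hb_def
    have ha : a ≠ 0 := hfx p hp
    have hb : b ≠ 0 := hfy p hp
    -- second derivative of f
    have hfc : ContDiffAt ℝ 2 f p := hf.contDiffAt hpU
    have hdf : DifferentiableAt ℝ (fderiv ℝ f) p :=
      (hfc.fderiv_right (m := 1) (by norm_num)).differentiableAt one_ne_zero
    set F'' := fderiv ℝ (fderiv ℝ f) p with hF''def
    have hF'' : HasFDerivAt (fderiv ℝ f) F'' p := hdf.hasFDerivAt
    set Dfx := (ContinuousLinearMap.apply ℝ ℝ ((1 : ℝ), (0 : ℝ))).comp F'' with hDfxdef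
    set Dfy := (ContinuousLinearMap.apply ℝ ℝ ((0 : ℝ), (1 : ℝ))).comp F'' with hDfydef
    have hDfx : HasFDerivAt (fun q => fderiv ℝ f q (1, 0)) Dfx p :=
      (ContinuousLinearMap.apply ℝ ℝ ((1 : ℝ), (0 : ℝ))).hasFDerivAt.comp p hF''
    have hDfy : HasFDerivAt (fun q => fderiv ℝ f q (0, 1)) Dfy p :=
      (ContinuousLinearMap.apply ℝ ℝ ((0 : ℝ), (1 : ℝ))).hasFDerivAt.comp p hF''
    -- inverses
    have hx_inv : HasFDerivAt (fun q => (fderiv ℝ f q (1, 0))⁻¹) ((-(a ^ 2)⁻¹) • Dfx) p :=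
      (hasDerivAt_inv ha).comp_hasFDerivAt p hDfx
    have hy_inv : HasFDerivAt (fun q => (fderiv ℝ f q (0, 1))⁻¹) ((-(b ^ 2)⁻¹) • Dfy) p :=
      (hasDerivAt_inv hb).comp_hasFDerivAt p hDfy
    -- eventual equalities for partials of g
    have hgx_ev : (fun q => fderiv ℝ g q (1, 0)) =ᶠ[nhds p]
        (fun q => -(fderiv ℝ f q (0, 1))⁻¹) := by
      filter_upwards [hpU] with q hq
      rw [hgx q hq]; rw [neg_div, one_div]
    have hgy_ev : (fun q => fderiv ℝ g q (0, 1)) =ᶠ[nhds p]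
        (fun q => (fderiv ℝ f q (1, 0))⁻¹) := by
      filter_upwards [hpU] with q hq
      rw [hgy q hq]; rw [one_div]
    have hgx_has : HasFDerivAt (fun q => fderiv ℝ g q (1, 0)) (-((-(b ^ 2)⁻¹) • Dfy)) p :=
      (hy_inv.neg).congr_of_eventuallyEq hgx_ev
    have hgy_has : HasFDerivAt (fun q => fderiv ℝ g q (0, 1)) ((-(a ^ 2)⁻¹) • Dfx) p :=
      hx_inv.congr_of_eventuallyEq hgy_ev
    -- fderiv g is differentiable at p
    set A : (ℝ × ℝ) → (ℝ × ℝ →L[ℝ] ℝ) := fun q =>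
      (-(fderiv ℝ f q (0, 1))⁻¹) • (ContinuousLinearMap.fst ℝ ℝ ℝ) +
      ((fderiv ℝ f q (1, 0))⁻¹) • (ContinuousLinearMap.snd ℝ ℝ ℝ) with hAdef
    have hAdiff : DifferentiableAt ℝ A p :=
      (((hy_inv.differentiableAt.neg).smul (differentiableAt_const _)).add
        ((hx_inv.differentiableAt).smul (differentiableAt_const _)))
    have hGA : (fderiv ℝ g) =ᶠ[nhds p] A := by
      filter_upwards [hpU] with q hq
      apply clm_ext2
      · rw [hgx q hq]
        simp [hAdef, neg_div, one_div]
      · rw [hgy q hq]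
        simp [hAdef, one_div]
    have hdg : DifferentiableAt ℝ (fderiv ℝ g) p :=
      hAdiff.congr_of_eventuallyEq hGA
    set G'' := fderiv ℝ (fderiv ℝ g) p with hG''def
    have hG'' : HasFDerivAt (fderiv ℝ g) G'' p := hdg.hasFDerivAt
    have hDgx : HasFDerivAt (fun q => fderiv ℝ g q (1, 0))
        ((ContinuousLinearMap.apply ℝ ℝ ((1 : ℝ), (0 : ℝ))).comp G'') p :=
      (ContinuousLinearMap.apply ℝ ℝ ((1 : ℝ), (0 : ℝ))).hasFDerivAt.comp p hG''
    have hDgy : HasFDerivAt (fun q => fderiv ℝ g q (0, 1))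
        ((ContinuousLinearMap.apply ℝ ℝ ((0 : ℝ), (1 : ℝ))).comp G'') p :=
      (ContinuousLinearMap.apply ℝ ℝ ((0 : ℝ), (1 : ℝ))).hasFDerivAt.comp p hG''
    have hgxx := hDgx.unique hgx_has
    have hgyy := hDgy.unique hgy_has
    have e1 : ∀ w : ℝ × ℝ, G'' w (1, 0) = (b ^ 2)⁻¹ * Dfy w := by
      intro w
      have := congrArg (fun (L : ℝ × ℝ →L[ℝ] ℝ) => L w) hgxx
      simpa using this
    have e2 : ∀ w : ℝ × ℝ, G'' w (0, 1) = -((a ^ 2)⁻¹ * Dfx w) := by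
      intro w
      have := congrArg (fun (L : ℝ × ℝ →L[ℝ] ℝ) => L w) hgyy
      simpa using this
    -- symmetry of second derivatives
    have hfd : ∀ᶠ q in nhds p, HasFDerivAt f (fderiv ℝ f q) q := by
      filter_upwards [hpU] with q hq
      exact ((hf.contDiffAt (hU.mem_nhds hq)).differentiableAt (by norm_num)).hasFDerivAt
    have hgd : ∀ᶠ q in nhds p, HasFDerivAt g (fderiv ℝ g q) q := by
      filter_upwards [hpU] with q hq
      exact (hg q hq).hasFDerivAt
    have symf := second_derivative_symmetric_of_eventually hfd hF''
    have symg := second_derivative_symmetric_of_eventually hgd hG''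
    -- concrete values
    have vfx : fderiv ℝ (fun q => fderiv ℝ f q (1, 0)) p (1, 0) = F'' (1, 0) (1, 0) := by
      rw [hDfx.fderiv]; simp [hDfxdef]
    have vfy : fderiv ℝ (fun q => fderiv ℝ f q (0, 1)) p (0, 1) = F'' (0, 1) (0, 1) := by
      rw [hDfy.fderiv]; simp [hDfydef]
    have key : -((a ^ 2)⁻¹ * F'' (1, 0) (1, 0)) = (b ^ 2)⁻¹ * F'' (0, 1) (0, 1) := by
      have := symg (1, 0) (0, 1)
      rw [e2 (1, 0), e1 (0, 1)] at this
      simpa [hDfxdef, hDfydef] using this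
    refine ⟨⟨?_, ?_⟩, ?_, ?_, ?_, ?_⟩
    · rw [hgy p hp]; field_simp
      exact div_self ha
    · rw [hgx p hp]; field_simp
      exact neg_inj.mpr (div_self hb)
    · rw [vfx, vfy]
      have ha2 : a ^ 2 ≠ 0 := pow_ne_zero _ ha
      have hb2 : b ^ 2 ≠ 0 := pow_ne_zero _ hb
      field_simp at key ⊢
      linarith [key]
    · exact hgx_has.differentiableAt
    · exact hgy_has.differentiableAt
    · have vgx : fderiv ℝ (fun q => fderiv ℝ g q (1, 0)) p (1, 0) =
          (b ^ 2)⁻¹ * F'' (1, 0) (0, 1) := by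
        rw [hgx_has.fderiv]; simp [hDfydef]
      have vgy : fderiv ℝ (fun q => fderiv ℝ g q (0, 1)) p (0, 1) =
          -((a ^ 2)⁻¹ * F'' (0, 1) (1, 0)) := by
        rw [hgy_has.fderiv]; simp [hDfxdef]
      rw [vgx, vgy, hgx p hp, hgy p hp, ← ha_def, ← hb_def]
      have hsym := symf (1, 0) (0, 1)
      rw [hsym]
      field_simp
      ring
  exact ⟨fun p hp => (main p hp).1, fun p hp => (main p hp).2.1, fun p hp => (main p hp).2.2⟩
end

section
/- Let G be a finite connected simple graph with boundary B and injective boundary values u : B → ℝ as in the context. Let c₀ : E → ℝ be positive conductances, and suppose Ψ : ℝ^E → ℝ^E and H : ℝ^E → ℝ^V are maps such that for every c in some neighborhood of c₀ consisting of positive conductance tuples, H(c) is the unique function extending u that is c-harmonic at every interior vertex, and Ψ(c)_e = c_e·(H(c)(x) − H(c)(y))² for every edge e = xy. If H(c₀)(x) ≠ H(c₀)(y) for every edge xy, then Ψ is differentiable at c₀ and the determinant of its derivative at c₀ equals (−1)^{|V| − |B|} · ∏_{e = xy ∈ E} (H(c₀)(x) − H(c₀)(y))². -/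
attribute [local instance] Classical.propDecidable

variable {V : Type*} [Fintype V] [DecidableEq V]

/-- c-harmonicity at interior vertices, for conductances indexed by the edge set. -/
def HarmonicE (G : SimpleGraph V) (B : Set V) (c : G.edgeSet → ℝ) (h : V → ℝ) : Prop :=
  ∀ x, x ∉ B → ∑ y ∈ G.neighborFinset x,
    (if hxy : G.Adj x y then c ⟨s(x, y), (G.mem_edgeSet).mpr hxy⟩ else 0) *
      (h x - h y) = 0

/-- the square of the difference of h across an edge. -/
noncomputable def edgeDiffSq (h : V → ℝ) : Sym2 V → ℝ :=
  Sym2.lift ⟨fun x y => (h x - h y) ^ 2, by intro x y; simp only []; ring⟩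

set_option linter.unusedSectionVars false

namespace St16

open Finset Matrix ContinuousLinearMap

variable (G : SimpleGraph V)

noncomputable def efst (e : G.edgeSet) : V := (e : Sym2 V).out.1
noncomputable def esnd (e : G.edgeSet) : V := (e : Sym2 V).out.2

lemma mk_eq (e : G.edgeSet) : s(efst G e, esnd G e) = (e : Sym2 V) :=
  Quot.out_eq _

lemma adj_fs (e : G.edgeSet) : G.Adj (efst G e) (esnd G e) :=
  (G.mem_edgeSet).mp (by rw [mk_eq]; exact e.2)

lemma fst_ne_snd (e : G.edgeSet) : efst G e ≠ esnd G e := (adj_fs G e).ne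

noncomputable def dm (e : G.edgeSet) (v : V) : ℝ :=
  if v = efst G e then 1 else if v = esnd G e then -1 else 0

lemma sum_dm_mul (e : G.edgeSet) (f : V → ℝ) :
    ∑ v, dm G e v * f v = f (efst G e) - f (esnd G e) := by
  have hne := fst_ne_snd G e
  have : ∀ v : V, dm G e v * f v =
      (if v = efst G e then f v else 0) + (if v = esnd G e then -f v else 0) := by
    intro v
    unfold dm
    by_cases h1 : v = efst G e
    · subst h1; simp [hne]
    · by_cases h2 : v = esnd G e
      · subst h2; simp [h1]
      · simp [h1, h2]
  rw [Finset.sum_congr rfl fun v _ => this v, Finset.sum_add_distrib,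
    Finset.sum_ite_eq' Finset.univ (efst G e) f,
    Finset.sum_ite_eq' Finset.univ (esnd G e) (fun v => -f v)]
  simp [sub_eq_add_neg]

variable (B : Set V) (u : V → ℝ)

noncomputable def wv : G.edgeSet → ℝ := fun e =>
  (if efst G e ∈ B then u (efst G e) else 0) - (if esnd G e ∈ B then u (esnd G e) else 0)

noncomputable def Lm (c : G.edgeSet → ℝ) : Matrix {x : V // x ∉ B} {x : V // x ∉ B} ℝ :=
  Matrix.of fun x y => ∑ e, (dm G e x.1 * dm G e y.1) * c e

noncomputable def bv (c : G.edgeSet → ℝ) : {x : V // x ∉ B} → ℝ :=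
  fun x => ∑ e, (-(dm G e x.1 * wv G B u e)) * c e

noncomputable def dmat : Matrix G.edgeSet {x : V // x ∉ B} ℝ :=
  Matrix.of fun e y => dm G e y.1

lemma sum_inter (f : V → ℝ) :
    (∑ y : {x : V // x ∉ B}, f y.1) = ∑ v : V, if v ∈ B then 0 else f v := by
  rw [← Finset.sum_subtype (Finset.univ.filter (fun v => v ∉ B)) (by simp) f,
    Finset.sum_filter]
  exact Finset.sum_congr rfl fun v _ => by by_cases h : v ∈ B <;> simp [h]

lemma delta_split (h : V → ℝ) (hb : ∀ b ∈ B, h b = u b) (e : G.edgeSet) :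
    h (efst G e) - h (esnd G e) =
      (∑ y : {x : V // x ∉ B}, dm G e y.1 * h y.1) + wv G B u e := by
  have key : ∀ v : V, h v = (if v ∈ B then 0 else h v) + (if v ∈ B then u v else 0) := by
    intro v; by_cases hv : v ∈ B <;> simp [hv]
    exact hb v hv
  have h1 : h (efst G e) - h (esnd G e) = ∑ v, dm G e v * h v := (sum_dm_mul G e h).symm
  rw [h1, Finset.sum_congr rfl fun v _ => by rw [key v, mul_add], Finset.sum_add_distrib]
  congr 1
  · rw [sum_inter B (fun v => dm G e v * h v)]
    exact Finset.sum_congr rfl fun v _ => by by_cases hv : v ∈ B <;> simp [hv]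
  · rw [show ∀ z, (∑ v, dm G e v * (if v ∈ B then u v else 0)) = z ↔ _ from fun z => Iff.rfl]
    rw [sum_dm_mul G e (fun v => if v ∈ B then u v else 0)]
    rfl

lemma incidence_sum (x : V) (c : G.edgeSet → ℝ) (h : V → ℝ) :
    ∑ y ∈ G.neighborFinset x,
      (if hxy : G.Adj x y then c ⟨s(x, y), (G.mem_edgeSet).mpr hxy⟩ else 0) * (h x - h y) =
    ∑ e, c e * dm G e x * (h (efst G e) - h (esnd G e)) := by
  symm
  have hfil : ∑ e ∈ Finset.univ.filter (fun e => x = efst G e ∨ x = esnd G e),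
      (fun e => c e * dm G e x * (h (efst G e) - h (esnd G e))) e
      = ∑ e, c e * dm G e x * (h (efst G e) - h (esnd G e)) := by
    apply Finset.sum_filter_of_ne
    intro e _ hne
    by_contra hcon
    push_neg at hcon
    have : dm G e x = 0 := by unfold dm; rw [if_neg hcon.1, if_neg hcon.2]
    simp [this] at hne
  rw [← hfil]
  refine Finset.sum_bij' (fun e _ => if x = efst G e then esnd G e else efst G e)
    (fun y hy => (⟨s(x, y), (G.mem_edgeSet).mpr ((G.mem_neighborFinset x y).mp hy)⟩ : G.edgeSet))
    ?_ ?_ ?_ ?_ ?_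
  · -- maps into neighborFinset
    intro e he
    rw [Finset.mem_filter] at he
    rw [SimpleGraph.mem_neighborFinset]
    rcases he.2 with h1 | h2
    · rw [if_pos h1, h1]; exact adj_fs G e
    · rw [if_neg (fun hh => fst_ne_snd G e (hh.symm.trans h2)), h2]
      exact (adj_fs G e).symm
  · -- maps into filter
    intro y hy
    rw [Finset.mem_filter]
    refine ⟨Finset.mem_univ _, ?_⟩
    have := mk_eq G (⟨s(x, y), (G.mem_edgeSet).mpr ((G.mem_neighborFinset x y).mp hy)⟩ : G.edgeSet)
    rcases Sym2.eq_iff.mp this with ⟨h1, _⟩ | ⟨_, h2⟩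
    · exact Or.inl h1.symm
    · exact Or.inr h2.symm
  · -- left inverse
    intro e he
    rw [Finset.mem_filter] at he
    apply Subtype.ext
    dsimp only
    rcases he.2 with h1 | h2
    · rw [if_pos h1]
      show s(x, esnd G e) = (e : Sym2 V)
      rw [h1, mk_eq]
    · have hx : x ≠ efst G e := fun hh => fst_ne_snd G e (hh.symm.trans h2)
      rw [if_neg hx]
      show s(x, efst G e) = (e : Sym2 V)
      rw [h2, Sym2.eq_swap, mk_eq]
  · -- right inverse
    intro y hy
    set e : G.edgeSet := ⟨s(x, y), (G.mem_edgeSet).mpr ((G.mem_neighborFinset x y).mp hy)⟩ with hedef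
    have hxy : G.Adj x y := (G.mem_neighborFinset x y).mp hy
    rcases Sym2.eq_iff.mp (mk_eq G e) with ⟨h1, h2⟩ | ⟨h1, h2⟩
    · rw [if_pos h1.symm]; exact h2
    · rw [if_neg ?_]
      · exact h1
      · exact fun hh => hxy.ne (hh.trans h1)
  · -- values agree
    intro e he
    rw [Finset.mem_filter] at he
    rcases he.2 with h1 | h2
    · rw [if_pos h1]
      have hadj : G.Adj x (esnd G e) := h1 ▸ adj_fs G e
      rw [dif_pos hadj]
      have hcast : (⟨s(x, esnd G e), (G.mem_edgeSet).mpr hadj⟩ : G.edgeSet) = e := by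
        apply Subtype.ext
        show s(x, esnd G e) = (e : Sym2 V)
        rw [h1, mk_eq]
      rw [hcast]
      have hdm : dm G e x = 1 := by unfold dm; rw [if_pos h1]
      rw [hdm, ← h1]
      ring
    · have hx : x ≠ efst G e := fun hh => fst_ne_snd G e (hh.symm.trans h2)
      rw [if_neg hx]
      have hadj : G.Adj x (efst G e) := h2 ▸ (adj_fs G e).symm
      rw [dif_pos hadj]
      have hcast : (⟨s(x, efst G e), (G.mem_edgeSet).mpr hadj⟩ : G.edgeSet) = e := by
        apply Subtype.ext
        show s(x, efst G e) = (e : Sym2 V)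
        rw [h2, Sym2.eq_swap, mk_eq]
      rw [hcast]
      have hdm : dm G e x = -1 := by unfold dm; rw [if_neg hx, if_pos h2]
      rw [hdm, ← h2]
      ring


lemma key_sum (c : G.edgeSet → ℝ) (h : V → ℝ) (hb : ∀ b ∈ B, h b = u b)
    (x : {x : V // x ∉ B}) :
    ∑ e, c e * dm G e x.1 * (h (efst G e) - h (esnd G e)) =
      (Lm G B c *ᵥ (fun y => h y.1)) x - bv G B u c x := by
  have step1 : ∀ e, c e * dm G e x.1 * (h (efst G e) - h (esnd G e)) =
      (∑ y : {x : V // x ∉ B}, (dm G e x.1 * dm G e y.1 * c e) * h y.1)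
        + c e * dm G e x.1 * wv G B u e := by
    intro e
    rw [delta_split G B u h hb e, mul_add, Finset.mul_sum]
    congr 1
    exact Finset.sum_congr rfl fun y _ => by ring
  rw [Finset.sum_congr rfl fun e _ => step1 e, Finset.sum_add_distrib, sub_eq_add_neg]
  congr 1
  · rw [Finset.sum_comm]
    simp only [Matrix.mulVec, dotProduct, Lm, Matrix.of_apply]
    refine Finset.sum_congr rfl fun y _ => ?_
    rw [Finset.sum_mul]
  · unfold bv
    rw [← Finset.sum_neg_distrib]
    exact Finset.sum_congr rfl fun e _ => by ring

lemma harmonicE_iff (c : G.edgeSet → ℝ) (h : V → ℝ) (hb : ∀ b ∈ B, h b = u b) :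
    HarmonicE G B c h ↔ Lm G B c *ᵥ (fun y => h y.1) = bv G B u c := by
  constructor
  · intro hh
    funext x
    have := hh x.1 x.2
    rw [incidence_sum G x.1 c h, key_sum G B u c h hb x] at this
    linarith [this]
  · intro hh x hx
    rw [incidence_sum G x c h]
    have := key_sum G B u c h hb ⟨x, hx⟩
    rw [hh] at this
    simpa using this

lemma const_of_adj (hconn : G.Connected) (f : V → ℝ)
    (hf : ∀ x y, G.Adj x y → f x = f y) : ∀ x y, f x = f y := by
  intro x y
  obtain ⟨w⟩ := hconn.preconnected x y
  induction w with
  | nil => rfl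
  | cons ha _ ih => exact (hf _ _ ha).trans ih

lemma isUnit_Lm_det (hconn : G.Connected) (hBne : B.Nonempty) (c : G.edgeSet → ℝ)
    (hc : ∀ e, 0 < c e) : IsUnit (Lm G B c).det := by
  apply (Matrix.isUnit_iff_isUnit_det _).mp
  apply Matrix.mulVec_injective_iff_isUnit.mp
  have h0 : ∀ φ, Lm G B c *ᵥ φ = 0 → φ = 0 := by
    intro φ hφ
    set φt : V → ℝ := fun v => if hv : v ∈ B then 0 else φ ⟨v, hv⟩ with hφt
    have hbz : ∀ b ∈ B, φt b = (fun _ : V => (0:ℝ)) b := fun b hb => dif_pos hb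
    have hwz : wv G B (fun _ => (0:ℝ)) = 0 := by
      funext e; unfold wv; simp
    have hS : ∀ e, φt (efst G e) - φt (esnd G e) = ∑ y : {x : V // x ∉ B}, dm G e y.1 * φ y := by
      intro e
      rw [delta_split G B (fun _ => (0:ℝ)) φt hbz e, hwz]
      simp only [Pi.zero_apply, add_zero]
      exact Finset.sum_congr rfl fun y _ => by rw [hφt]; simp [y.2]
    have expand : ∑ x : {x : V // x ∉ B}, φ x * (Lm G B c *ᵥ φ) x
        = ∑ e, c e * (∑ y : {x : V // x ∉ B}, dm G e y.1 * φ y)^2 := by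
      simp only [Matrix.mulVec, dotProduct, Lm, Matrix.of_apply]
      calc ∑ x : {x : V // x ∉ B}, φ x * ∑ y : {x : V // x ∉ B},
              (∑ e, (dm G e x.1 * dm G e y.1) * c e) * φ y
          = ∑ x : {x : V // x ∉ B}, ∑ y : {x : V // x ∉ B}, ∑ e,
              c e * ((dm G e x.1 * φ x) * (dm G e y.1 * φ y)) := by
            simp only [Finset.mul_sum, Finset.sum_mul]
            exact Finset.sum_congr rfl fun x _ => Finset.sum_congr rfl fun y _ =>
              Finset.sum_congr rfl fun e _ => by ring
        _ = ∑ x : {x : V // x ∉ B}, ∑ e, ∑ y : {x : V // x ∉ B},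
              c e * ((dm G e x.1 * φ x) * (dm G e y.1 * φ y)) :=
            Finset.sum_congr rfl fun x _ => Finset.sum_comm
        _ = ∑ e, ∑ x : {x : V // x ∉ B}, ∑ y : {x : V // x ∉ B},
              c e * ((dm G e x.1 * φ x) * (dm G e y.1 * φ y)) := Finset.sum_comm
        _ = ∑ e, c e * (∑ y : {x : V // x ∉ B}, dm G e y.1 * φ y)^2 := by
            refine Finset.sum_congr rfl fun e _ => ?_
            rw [sq, Finset.sum_mul_sum]
            simp only [Finset.mul_sum]
    have hzero : ∑ e, c e * (∑ y : {x : V // x ∉ B}, dm G e y.1 * φ y)^2 = 0 := by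
      rw [← expand, hφ]
      simp
    have hSe : ∀ e, (∑ y : {x : V // x ∉ B}, dm G e y.1 * φ y) = 0 := by
      have := (Finset.sum_eq_zero_iff_of_nonneg (fun e _ =>
        mul_nonneg (hc e).le (sq_nonneg _))).mp hzero
      intro e
      have he := this e (Finset.mem_univ e)
      have := (hc e).ne'
      rcases mul_eq_zero.mp he with h | h
      · exact absurd h this
      · exact pow_eq_zero_iff (two_ne_zero) |>.mp h
    have hadjconst : ∀ a b, G.Adj a b → φt a = φt b := by
      intro a b hab
      set e : G.edgeSet := ⟨s(a, b), (G.mem_edgeSet).mpr hab⟩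
      have h0 : φt (efst G e) = φt (esnd G e) := by
        have := hS e
        rw [hSe e] at this
        linarith
      rcases Sym2.eq_iff.mp (mk_eq G e) with ⟨h1, h2⟩ | ⟨h1, h2⟩
      · rw [← h1, ← h2]; exact h0
      · rw [← h1, ← h2]; exact h0.symm
    obtain ⟨b₀, hb₀⟩ := hBne
    funext y
    have h1 : φt y.1 = φt b₀ := const_of_adj G hconn φt hadjconst y.1 b₀
    have h2 : φt b₀ = 0 := by simp only [hφt]; rw [dif_pos hb₀]
    have h3 : φt y.1 = φ y := by simp only [hφt]; rw [dif_neg y.2]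
    show φ y = (0 : ℝ)
    rw [← h3, h1, h2]

  intro a b hab
  exact sub_eq_zero.mp (h0 (a - b) (by rw [Matrix.mulVec_sub, hab, sub_self]))

lemma diffAt_det {E : Type*} [NormedAddCommGroup E] [NormedSpace ℝ E]
    {ι : Type*} [Fintype ι] [DecidableEq ι] {M : E → Matrix ι ι ℝ} {x : E}
    (h : ∀ i j, DifferentiableAt ℝ (fun c => M c i j) x) :
    DifferentiableAt ℝ (fun c => (M c).det) x := by
  simp only [Matrix.det_apply']
  apply DifferentiableAt.fun_sum
  intro σ _
  apply DifferentiableAt.const_mul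
  exact (HasFDerivAt.finset_prod fun i _ => (h (σ i) i).hasFDerivAt).differentiableAt

noncomputable def lcl (k : G.edgeSet → ℝ) : (G.edgeSet → ℝ) →L[ℝ] ℝ :=
  ∑ e, k e • (ContinuousLinearMap.proj e : (G.edgeSet → ℝ) →L[ℝ] ℝ)

lemma lcl_apply (k v : G.edgeSet → ℝ) : lcl G k v = ∑ e, k e * v e := by
  unfold lcl
  rw [ContinuousLinearMap.sum_apply]
  exact Finset.sum_congr rfl fun e _ => rfl

lemma lin_hasFDerivAt (k : G.edgeSet → ℝ) (c₀ : G.edgeSet → ℝ) :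
    HasFDerivAt (fun c => ∑ e, k e * c e) (lcl G k) c₀ := by
  have : (fun c : G.edgeSet → ℝ => ∑ e, k e * c e) = fun c => lcl G k c := by
    funext c
    rw [lcl_apply]
  rw [this]
  exact (lcl G k).hasFDerivAt

lemma hasFDerivAt_Lm (c₀ : G.edgeSet → ℝ) (x y : {x : V // x ∉ B}) :
    HasFDerivAt (fun c => Lm G B c x y) (lcl G fun e => dm G e x.1 * dm G e y.1) c₀ :=
  lin_hasFDerivAt G _ c₀

lemma hasFDerivAt_bv (c₀ : G.edgeSet → ℝ) (x : {x : V // x ∉ B}) :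
    HasFDerivAt (fun c => bv G B u c x) (lcl G fun e => -(dm G e x.1 * wv G B u e)) c₀ :=
  lin_hasFDerivAt G _ c₀

lemma diffAt_Lm_det (c₀ : G.edgeSet → ℝ) :
    DifferentiableAt ℝ (fun c => (Lm G B c).det) c₀ :=
  diffAt_det fun x y => (hasFDerivAt_Lm G B c₀ x y).differentiableAt

lemma diffAt_adjugate (c₀ : G.edgeSet → ℝ) (x y : {x : V // x ∉ B}) :
    DifferentiableAt ℝ (fun c => (Lm G B c).adjugate x y) c₀ := by
  simp only [Matrix.adjugate_apply]
  apply diffAt_det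
  intro i j
  by_cases hi : i = y
  · subst hi
    simp only [Matrix.updateRow_self]
    exact differentiableAt_const _
  · simp only [Matrix.updateRow_ne hi]
    exact (hasFDerivAt_Lm G B c₀ i j).differentiableAt

noncomputable def gfun (c : G.edgeSet → ℝ) : {x : V // x ∉ B} → ℝ :=
  (Lm G B c)⁻¹ *ᵥ bv G B u c

lemma gfun_formula (c : G.edgeSet → ℝ) (y : {x : V // x ∉ B}) :
    gfun G B u c y = (Lm G B c).det⁻¹ * ((Lm G B c).adjugate *ᵥ bv G B u c) y := by
  unfold gfun
  rw [Matrix.inv_def, Ring.inverse_eq_inv, Matrix.smul_mulVec]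
  rfl

lemma diffAt_gfun (c₀ : G.edgeSet → ℝ) (hdet : (Lm G B c₀).det ≠ 0) :
    DifferentiableAt ℝ (gfun G B u) c₀ := by
  rw [differentiableAt_pi]
  intro y
  have : (fun c => gfun G B u c y)
      = fun c => (Lm G B c).det⁻¹ * (∑ z, (Lm G B c).adjugate y z * bv G B u c z) := by
    funext c
    rw [gfun_formula]
    rfl
  rw [this]
  refine DifferentiableAt.mul ((diffAt_Lm_det G B c₀).inv hdet) ?_
  refine DifferentiableAt.fun_sum fun z _ => ?_
  exact (diffAt_adjugate G B c₀ y z).mul (hasFDerivAt_bv G B u c₀ z).differentiableAt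

lemma Lm_mulVec_gfun (c : G.edgeSet → ℝ) (hdet : IsUnit (Lm G B c).det) :
    Lm G B c *ᵥ gfun G B u c = bv G B u c := by
  unfold gfun
  rw [Matrix.mulVec_mulVec, Matrix.mul_nonsing_inv _ hdet, Matrix.one_mulVec]


noncomputable def Hx (c : G.edgeSet → ℝ) : V → ℝ :=
  fun v => if hv : v ∈ B then u v else gfun G B u c ⟨v, hv⟩

lemma Hx_boundary (c : G.edgeSet → ℝ) : ∀ b ∈ B, Hx G B u c b = u b :=
  fun _ hb => dif_pos hb

lemma Hx_restrict (c : G.edgeSet → ℝ) :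
    (fun y : {x : V // x ∉ B} => Hx G B u c y.1) = gfun G B u c :=
  funext fun y => by unfold Hx; rw [dif_neg y.2]

lemma harmonic_Hx (c : G.edgeSet → ℝ) (hdet : IsUnit (Lm G B c).det) :
    HarmonicE G B c (Hx G B u c) := by
  rw [harmonicE_iff G B u c _ (Hx_boundary G B u c), Hx_restrict]
  exact Lm_mulVec_gfun G B u c hdet

noncomputable def vdelta (c : G.edgeSet → ℝ) : G.edgeSet → ℝ :=
  fun e => (∑ y : {x : V // x ∉ B}, dm G e y.1 * gfun G B u c y) + wv G B u e

lemma vdelta_eq (c : G.edgeSet → ℝ) (e : G.edgeSet) :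
    Hx G B u c (efst G e) - Hx G B u c (esnd G e) = vdelta G B u c e := by
  rw [delta_split G B u (Hx G B u c) (Hx_boundary G B u c) e]
  unfold vdelta
  congr 1
  exact Finset.sum_congr rfl fun y _ => by rw [show Hx G B u c y.1 = gfun G B u c y from
    congrFun (Hx_restrict G B u c) y]

noncomputable def zc (c₀ v : G.edgeSet → ℝ) : {x : V // x ∉ B} → ℝ :=
  fun x => ∑ e, (-(dm G e x.1 * vdelta G B u c₀ e)) * v e

lemma eventually_isUnit (c₀ : G.edgeSet → ℝ) (hdet : IsUnit (Lm G B c₀).det) :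
    ∀ᶠ c in nhds c₀, IsUnit (Lm G B c).det := by
  have hcont : ContinuousAt (fun c => (Lm G B c).det) c₀ :=
    (diffAt_Lm_det G B c₀).continuousAt
  exact (hcont.eventually_ne hdet.ne_zero).mono fun c hc => isUnit_iff_ne_zero.mpr hc

lemma key_deriv (c₀ : G.edgeSet → ℝ) (hdet : IsUnit (Lm G B c₀).det) (v : G.edgeSet → ℝ) :
    fderiv ℝ (gfun G B u) c₀ v = (Lm G B c₀)⁻¹ *ᵥ zc G B u c₀ v := by
  have hdiff := diffAt_gfun G B u c₀ hdet.ne_zero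
  set Dg := fderiv ℝ (gfun G B u) c₀ with hDg
  have hgy : ∀ y, HasFDerivAt (fun c => gfun G B u c y)
      ((ContinuousLinearMap.proj y).comp Dg) c₀ :=
    fun y => hasFDerivAt_pi'.1 hdiff.hasFDerivAt y
  have hev : ∀ᶠ c in nhds c₀, Lm G B c *ᵥ gfun G B u c = bv G B u c :=
    (eventually_isUnit G B c₀ hdet).mono fun c hc => Lm_mulVec_gfun G B u c hc
  have main : ∀ x : {x : V // x ∉ B},
      ∑ y, (Lm G B c₀ x y * Dg v y + gfun G B u c₀ y * lcl G (fun e => dm G e x.1 * dm G e y.1) v)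
        = ∑ e, (-(dm G e x.1 * wv G B u e)) * v e := by
    intro x
    have hL : HasFDerivAt (fun c => ∑ y, Lm G B c x y * gfun G B u c y)
        (∑ y, (Lm G B c₀ x y • (ContinuousLinearMap.proj y).comp Dg
          + gfun G B u c₀ y • lcl G (fun e => dm G e x.1 * dm G e y.1))) c₀ := by
      apply HasFDerivAt.fun_sum
      intro y _
      exact (hasFDerivAt_Lm G B c₀ x y).mul (hgy y)
    have heq : (fun c => ∑ y, Lm G B c x y * gfun G B u c y)
        =ᶠ[nhds c₀] (fun c => bv G B u c x) := by
      refine hev.mono fun c hc => ?_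
      have h2 := congrFun hc x
      show ∑ y, Lm G B c x y * gfun G B u c y = bv G B u c x
      rw [← h2]
      simp [Matrix.mulVec, dotProduct]
    have hL' : HasFDerivAt (fun c => ∑ y, Lm G B c x y * gfun G B u c y)
        (lcl G fun e => -(dm G e x.1 * wv G B u e)) c₀ :=
      (hasFDerivAt_bv G B u c₀ x).congr_of_eventuallyEq heq
    have huniq := hL.unique hL'
    have happ := congrArg (fun T : (G.edgeSet → ℝ) →L[ℝ] ℝ => T v) huniq
    simp only [ContinuousLinearMap.sum_apply, ContinuousLinearMap.add_apply,
      ContinuousLinearMap.smul_apply, ContinuousLinearMap.comp_apply,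
      ContinuousLinearMap.proj_apply, smul_eq_mul] at happ
    rw [lcl_apply] at happ
    rw [← happ]
  have step : Lm G B c₀ *ᵥ Dg v = zc G B u c₀ v := by
    funext x
    have hm := main x
    have lhs : (Lm G B c₀ *ᵥ Dg v) x = ∑ y, Lm G B c₀ x y * Dg v y := by
      simp [Matrix.mulVec, dotProduct]
    have expand2 : ∑ y, gfun G B u c₀ y * lcl G (fun e => dm G e x.1 * dm G e y.1) v
        = ∑ e, (dm G e x.1 * (∑ y, dm G e y.1 * gfun G B u c₀ y)) * v e := by
      calc ∑ y, gfun G B u c₀ y * lcl G (fun e => dm G e x.1 * dm G e y.1) v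
          = ∑ y, ∑ e, dm G e x.1 * (dm G e y.1 * gfun G B u c₀ y) * v e := by
            refine Finset.sum_congr rfl fun y _ => ?_
            rw [lcl_apply, Finset.mul_sum]
            exact Finset.sum_congr rfl fun e _ => by ring
        _ = ∑ e, ∑ y, dm G e x.1 * (dm G e y.1 * gfun G B u c₀ y) * v e := Finset.sum_comm
        _ = ∑ e, (dm G e x.1 * (∑ y, dm G e y.1 * gfun G B u c₀ y)) * v e := by
            refine Finset.sum_congr rfl fun e _ => ?_
            rw [Finset.mul_sum, Finset.sum_mul]
    have : (Lm G B c₀ *ᵥ Dg v) x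
        = ∑ e, (-(dm G e x.1 * wv G B u e)) * v e
          - ∑ e, (dm G e x.1 * (∑ y, dm G e y.1 * gfun G B u c₀ y)) * v e := by
      rw [lhs, ← expand2, eq_sub_iff_add_eq, ← Finset.sum_add_distrib]
      exact hm ▸ Finset.sum_congr rfl fun y _ => rfl
    rw [this]
    unfold zc vdelta
    rw [← Finset.sum_sub_distrib]
    exact Finset.sum_congr rfl fun e _ => by ring
  have cancel : (Lm G B c₀)⁻¹ *ᵥ (Lm G B c₀ *ᵥ Dg v) = Dg v := by
    rw [Matrix.mulVec_mulVec, Matrix.nonsing_inv_mul _ hdet, Matrix.one_mulVec]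
  rw [← cancel, step]


noncomputable def KK (c₀ : G.edgeSet → ℝ) : Matrix G.edgeSet G.edgeSet ℝ :=
  dmat G B * (Lm G B c₀)⁻¹ * (dmat G B)ᵀ

noncomputable def MT (c₀ : G.edgeSet → ℝ) : Matrix G.edgeSet G.edgeSet ℝ :=
  Matrix.of fun e f => (if f = e then vdelta G B u c₀ e ^ 2 else 0)
    - 2 * c₀ e * vdelta G B u c₀ e * KK G B c₀ e f * vdelta G B u c₀ f

noncomputable def Tclm (c₀ : G.edgeSet → ℝ) : (G.edgeSet → ℝ) →L[ℝ] (G.edgeSet → ℝ) :=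
  LinearMap.toContinuousLinearMap (Matrix.toLin' (MT G B u c₀))

lemma Tclm_apply (c₀ v : G.edgeSet → ℝ) (e : G.edgeSet) :
    Tclm G B u c₀ v e = vdelta G B u c₀ e ^ 2 * v e
      - 2 * c₀ e * vdelta G B u c₀ e * ∑ f, KK G B c₀ e f * (vdelta G B u c₀ f * v f) := by
  have h1 : Tclm G B u c₀ v = MT G B u c₀ *ᵥ v := by
    unfold Tclm
    rw [LinearMap.coe_toContinuousLinearMap']
    exact Matrix.toLin'_apply _ v
  rw [h1]
  show ∑ f, MT G B u c₀ e f * v f = _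
  have h2 : ∀ f, MT G B u c₀ e f * v f
      = (if f = e then vdelta G B u c₀ e ^ 2 * v f else 0)
        - 2 * c₀ e * vdelta G B u c₀ e * (KK G B c₀ e f * (vdelta G B u c₀ f * v f)) := by
    intro f
    show ((if f = e then vdelta G B u c₀ e ^ 2 else 0)
      - 2 * c₀ e * vdelta G B u c₀ e * KK G B c₀ e f * vdelta G B u c₀ f) * v f = _
    by_cases h : f = e
    · rw [if_pos h, if_pos h]; ring
    · rw [if_neg h, if_neg h]; ring
  rw [Finset.sum_congr rfl fun f _ => h2 f, Finset.sum_sub_distrib,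
    Finset.sum_ite_eq' Finset.univ e (fun f => vdelta G B u c₀ e ^ 2 * v f),
    if_pos (Finset.mem_univ e), ← Finset.mul_sum]

lemma Lm_eq (c : G.edgeSet → ℝ) :
    Lm G B c = (dmat G B)ᵀ * (Matrix.diagonal c * dmat G B) := by
  ext x y
  rw [Matrix.mul_apply]
  simp only [Matrix.transpose_apply, Matrix.diagonal_mul, dmat, Matrix.of_apply, Lm]
  exact Finset.sum_congr rfl fun e _ => by ring

lemma dmat_Dg (c₀ : G.edgeSet → ℝ) (hdet : IsUnit (Lm G B c₀).det) (v : G.edgeSet → ℝ)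
    (e : G.edgeSet) :
    ∑ y, dm G e y.1 * (fderiv ℝ (gfun G B u) c₀ v y)
      = -∑ f, KK G B c₀ e f * (vdelta G B u c₀ f * v f) := by
  have h1 := congrFun (key_deriv G B u c₀ hdet v)
  have hz : zc G B u c₀ v = (dmat G B)ᵀ *ᵥ (fun f => -(vdelta G B u c₀ f * v f)) := by
    funext x
    simp only [zc, Matrix.mulVec, dotProduct, Matrix.transpose_apply, dmat, Matrix.of_apply]
    exact Finset.sum_congr rfl fun f _ => by ring
  calc ∑ y, dm G e y.1 * (fderiv ℝ (gfun G B u) c₀ v y)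
      = (dmat G B *ᵥ ((Lm G B c₀)⁻¹ *ᵥ zc G B u c₀ v)) e := by
        simp only [Matrix.mulVec, dotProduct, dmat, Matrix.of_apply]
        exact Finset.sum_congr rfl fun y _ => by rw [h1 y]; simp [Matrix.mulVec, dotProduct]
    _ = (KK G B c₀ *ᵥ (fun f => -(vdelta G B u c₀ f * v f))) e := by
        rw [hz, Matrix.mulVec_mulVec, Matrix.mulVec_mulVec]
        rfl
    _ = -∑ f, KK G B c₀ e f * (vdelta G B u c₀ f * v f) := by
        show ∑ f, KK G B c₀ e f * -(vdelta G B u c₀ f * v f) = _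
        rw [← Finset.sum_neg_distrib]
        exact Finset.sum_congr rfl fun f _ => by ring

lemma hasFDerivAt_Phi (c₀ : G.edgeSet → ℝ) (hdet : IsUnit (Lm G B c₀).det) :
    HasFDerivAt (fun c => (fun e => c e * vdelta G B u c e ^ 2)) (Tclm G B u c₀) c₀ := by
  apply hasFDerivAt_pi''
  intro e
  have hdiff := diffAt_gfun G B u c₀ hdet.ne_zero
  set Dg := fderiv ℝ (gfun G B u) c₀ with hDgdef
  have hgy : ∀ y, HasFDerivAt (fun c => gfun G B u c y)
      ((ContinuousLinearMap.proj y).comp Dg) c₀ :=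
    fun y => hasFDerivAt_pi'.1 hdiff.hasFDerivAt y
  set De : (G.edgeSet → ℝ) →L[ℝ] ℝ :=
    ∑ y, dm G e y.1 • ((ContinuousLinearMap.proj y).comp Dg) with hDedef
  have hvd : HasFDerivAt (fun c => vdelta G B u c e) De c₀ := by
    unfold vdelta
    apply HasFDerivAt.add_const
    apply HasFDerivAt.fun_sum
    intro y _
    exact (hgy y).const_mul _
  have hsq : HasFDerivAt (fun c => vdelta G B u c e ^ 2)
      (vdelta G B u c₀ e • De + vdelta G B u c₀ e • De) c₀ := by
    have h2 := hvd.mul hvd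
    have heq : (fun c => vdelta G B u c e ^ 2)
        = fun c => vdelta G B u c e * vdelta G B u c e := by
      funext c; ring
    rw [heq]
    exact h2
  have hce : HasFDerivAt (fun c : G.edgeSet → ℝ => c e)
      (ContinuousLinearMap.proj e : (G.edgeSet → ℝ) →L[ℝ] ℝ) c₀ :=
    hasFDerivAt_apply e c₀
  have hmul := hce.fun_mul hsq
  refine hmul.congr_fderiv ?_
  ext v
  simp only [ContinuousLinearMap.comp_apply, ContinuousLinearMap.add_apply,
    ContinuousLinearMap.smul_apply, ContinuousLinearMap.proj_apply, smul_eq_mul,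
    ContinuousLinearMap.sum_apply, pow_one]
  rw [Tclm_apply]
  have hDe : De v = ∑ y, dm G e y.1 * Dg v y := by
    rw [hDedef]
    simp only [ContinuousLinearMap.sum_apply, ContinuousLinearMap.smul_apply,
      ContinuousLinearMap.comp_apply, ContinuousLinearMap.proj_apply, smul_eq_mul]
  have hkey := dmat_Dg G B u c₀ hdet v e
  rw [← hDgdef] at hkey
  have : De v = -∑ f, KK G B c₀ e f * (vdelta G B u c₀ f * v f) := by rw [hDe, hkey]
  rw [this]
  ring


lemma det_MT (c₀ : G.edgeSet → ℝ) (hdet : IsUnit (Lm G B c₀).det) :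
    (MT G B u c₀).det = (-1 : ℝ) ^ (Fintype.card {x : V // x ∉ B})
      * ∏ e, vdelta G B u c₀ e ^ 2 := by
  have hfact : MT G B u c₀ = Matrix.diagonal (vdelta G B u c₀)
      * (1 - (2 : ℝ) • (Matrix.diagonal c₀ * KK G B c₀))
      * Matrix.diagonal (vdelta G B u c₀) := by
    ext e f
    rw [Matrix.mul_diagonal, Matrix.diagonal_mul]
    simp only [Matrix.sub_apply, Matrix.smul_apply, Matrix.diagonal_mul, smul_eq_mul,
      Matrix.one_apply]
    show (if f = e then vdelta G B u c₀ e ^ 2 else 0)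
      - 2 * c₀ e * vdelta G B u c₀ e * KK G B c₀ e f * vdelta G B u c₀ f = _
    by_cases h : e = f
    · subst h
      rw [if_pos rfl, if_pos rfl]
      ring
    · rw [if_neg (fun hh => h hh.symm), if_neg h]
      ring
  rw [hfact, Matrix.det_mul, Matrix.det_mul, Matrix.det_diagonal]
  have hX : (1 : Matrix G.edgeSet G.edgeSet ℝ) - (2 : ℝ) • (Matrix.diagonal c₀ * KK G B c₀)
      = 1 + ((-2 : ℝ) • (Matrix.diagonal c₀ * dmat G B * (Lm G B c₀)⁻¹)) * (dmat G B)ᵀ := by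
    rw [Matrix.smul_mul, neg_smul, ← sub_eq_add_neg]
    have h3 : Matrix.diagonal c₀ * KK G B c₀
        = Matrix.diagonal c₀ * dmat G B * (Lm G B c₀)⁻¹ * (dmat G B)ᵀ := by
      unfold KK
      rw [← Matrix.mul_assoc, ← Matrix.mul_assoc]
    rw [h3]
  rw [hX, Matrix.det_one_add_mul_comm]
  have hBA : (dmat G B)ᵀ * ((-2 : ℝ) • (Matrix.diagonal c₀ * dmat G B * (Lm G B c₀)⁻¹))
      = (-2 : ℝ) • (1 : Matrix {x : V // x ∉ B} {x : V // x ∉ B} ℝ) := by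
    rw [Matrix.mul_smul]
    congr 1
    have h2 : (dmat G B)ᵀ * (Matrix.diagonal c₀ * dmat G B * (Lm G B c₀)⁻¹)
        = Lm G B c₀ * (Lm G B c₀)⁻¹ := by
      rw [← Matrix.mul_assoc, ← Lm_eq G B c₀]
    rw [h2, Matrix.mul_nonsing_inv _ hdet]
  rw [hBA]
  have hneg : (1 : Matrix {x : V // x ∉ B} {x : V // x ∉ B} ℝ)
      + (-2 : ℝ) • (1 : Matrix {x : V // x ∉ B} {x : V // x ∉ B} ℝ) = -1 := by
    ext i j
    by_cases h : i = j
    · subst h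
      simp [Matrix.one_apply]
      norm_num
    · simp [Matrix.one_apply, h]
  rw [hneg, Matrix.det_neg, Matrix.det_one, mul_one]
  have hprod : (∏ e, vdelta G B u c₀ e) * (∏ e, vdelta G B u c₀ e)
      = ∏ e, vdelta G B u c₀ e ^ 2 := by
    rw [← Finset.prod_mul_distrib]
    exact Finset.prod_congr rfl fun e _ => (sq _).symm
  rw [← hprod]
  ring

end St16

/-- the conductance-to-energy map Ψ has Jacobian determinant
(−1)^{|V|−|B|} ∏_{e=xy} (h(x) − h(y))² at c₀, where h is the c₀-harmonic extension of u. -/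
theorem stmt_16 (G : SimpleGraph V) (hconn : G.Connected)
    (B : Set V) (hB : BoundaryOK G B) (u : V → ℝ) (hu : Set.InjOn u B)
    (c₀ : G.edgeSet → ℝ) (hc₀ : ∀ e, 0 < c₀ e)
    (Ψ : (G.edgeSet → ℝ) → (G.edgeSet → ℝ)) (H : (G.edgeSet → ℝ) → (V → ℝ))
    (hnbhd : ∃ N ∈ nhds c₀, ∀ c ∈ N, (∀ e, 0 < c e) ∧
      (∀ b ∈ B, H c b = u b) ∧ HarmonicE G B c (H c) ∧
      (∀ h' : V → ℝ, (∀ b ∈ B, h' b = u b) → HarmonicE G B c h' → h' = H c) ∧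
      ∀ (x y : V) (hxy : G.Adj x y),
        Ψ c ⟨s(x, y), (G.mem_edgeSet).mpr hxy⟩ =
          c ⟨s(x, y), (G.mem_edgeSet).mpr hxy⟩ * (H c x - H c y) ^ 2)
    (hne : ∀ x y, G.Adj x y → H c₀ x ≠ H c₀ y) :
    DifferentiableAt ℝ Ψ c₀ ∧
    LinearMap.det (fderiv ℝ Ψ c₀).toLinearMap =
      (-1 : ℝ) ^ (Fintype.card V - B.ncard) * ∏ e : G.edgeSet, edgeDiffSq (H c₀) e.1 := by
  classical
  obtain ⟨N, hN, hprop⟩ := hnbhd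
  have hBne : B.Nonempty := by
    rcases hB with ⟨h2, -⟩
    exact Set.nonempty_of_ncard_ne_zero (by omega)
  have hdet₀ : IsUnit (St16.Lm G B c₀).det := St16.isUnit_Lm_det G B hconn hBne c₀ hc₀
  have hevN : ∀ᶠ c in nhds c₀, c ∈ N := Filter.eventually_iff.mpr (by simpa using hN)
  have hevU := St16.eventually_isUnit G B c₀ hdet₀
  have hΨΦ : Ψ =ᶠ[nhds c₀] (fun c => fun e => c e * St16.vdelta G B u c e ^ 2) := by
    filter_upwards [hevN, hevU] with c hcN hcU
    obtain ⟨hpos, hbd, hharm, huniq, hval⟩ := hprop c hcN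
    have hHx : St16.Hx G B u c = H c :=
      huniq _ (St16.Hx_boundary G B u c) (St16.harmonic_Hx G B u c hcU)
    funext e
    have hE := hval (St16.efst G e) (St16.esnd G e) (St16.adj_fs G e)
    have hee : (⟨s(St16.efst G e, St16.esnd G e),
        (G.mem_edgeSet).mpr (St16.adj_fs G e)⟩ : G.edgeSet) = e :=
      Subtype.ext (St16.mk_eq G e)
    rw [hee] at hE
    rw [hE, ← hHx, St16.vdelta_eq G B u c e]
  have hΦ := St16.hasFDerivAt_Phi G B u c₀ hdet₀
  have hΨ : HasFDerivAt Ψ (St16.Tclm G B u c₀) c₀ := hΦ.congr_of_eventuallyEq hΨΦ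
  refine ⟨hΨ.differentiableAt, ?_⟩
  rw [hΨ.fderiv]
  have hlin : (St16.Tclm G B u c₀).toLinearMap = Matrix.toLin' (St16.MT G B u c₀) :=
    LinearMap.coe_toContinuousLinearMap _
  rw [hlin, LinearMap.det_toLin', St16.det_MT G B u c₀ hdet₀]
  have hcard : Fintype.card {x : V // x ∉ B} = Fintype.card V - B.ncard := by
    rw [Fintype.card_subtype_compl]
    congr 1
    rw [Set.ncard_eq_toFinset_card', Set.toFinset_card]
  have hprod : ∏ e : G.edgeSet, edgeDiffSq (H c₀) e.1
      = ∏ e, St16.vdelta G B u c₀ e ^ 2 := by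
    have hc₀N : c₀ ∈ N := mem_of_mem_nhds hN
    obtain ⟨hpos, hbd, hharm, huniq, hval⟩ := hprop c₀ hc₀N
    have hHx : St16.Hx G B u c₀ = H c₀ :=
      huniq _ (St16.Hx_boundary G B u c₀) (St16.harmonic_Hx G B u c₀ hdet₀)
    refine Finset.prod_congr rfl fun e _ => ?_
    rw [← St16.mk_eq G e]
    unfold edgeDiffSq
    rw [Sym2.lift_mk, ← hHx]
    show (St16.Hx G B u c₀ (St16.efst G e) - St16.Hx G B u c₀ (St16.esnd G e)) ^ 2
      = St16.vdelta G B u c₀ e ^ 2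
    rw [St16.vdelta_eq G B u c₀ e]
  rw [hcard, hprod]
end
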